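/- arXiv:2005.09251 — 5 statements merged into one kernel-verified Lean document; each statement's English description precedes it below -/
import Mathlib

section
/- If G is a finite simple graph on n ≥ 1 vertices, p ∈ (0,1), and a ≥ 1 is an integer, then |t_{K_{2,a}}(f_{p,G})| ≤ 2·ν_{p,G}^a + 2·n^{−2/3}. -/
set_option maxHeartbeats 1000000



/- The `H`-density `t_H(W)` of a kernel `W` on the finite vertex set `V`, equipped with
the uniform probability measure: `t_H(W) = E ∏_{uv ∈ E(H)} W(x_u, x_v)` over independent
uniform `x_v`. -/
open scoped Classical in
noncomputable def graphDensity {V K : Type*} [Fintype V] [Fintype K] [LinearOrder K]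
    (H : SimpleGraph K) (W : V → V → ℝ) : ℝ :=
  (∑ x : K → V, ∏ p ∈ Finset.univ.filter (fun p : K × K => p.1 < p.2 ∧ H.Adj p.1 p.2),
    W (x p.1) (x p.2)) / (Fintype.card V : ℝ) ^ (Fintype.card K)

/-- The complete bipartite graph `K_{a,b}`, realized on `Fin (a + b)`. -/
def bipGraph (a b : ℕ) : SimpleGraph (Fin (a + b)) :=
  SimpleGraph.fromRel (fun u v => u.val < a ∧ a ≤ v.val)

/-- `W_G`, the `{0,1}`-valued adjacency kernel of the graph `G` (with `W_G(x,x) = 0`). -/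
def adjKernel {V : Type*} (G : SimpleGraph V) [DecidableRel G.Adj] (x y : V) : ℝ :=
  if G.Adj x y then 1 else 0

/-- `f_{p,G}(x,y) = W_G(x,y) − p`. -/
noncomputable def fP {V : Type*} (G : SimpleGraph V) [DecidableRel G.Adj] (p : ℝ)
    (x y : V) : ℝ :=
  adjKernel G x y - p

/-- `μ_{p,G} = max_x |E_y f_{p,G}(x,y)|`. -/
noncomputable def muP {V : Type*} [Fintype V] (G : SimpleGraph V) [DecidableRel G.Adj]
    (p : ℝ) : ℝ :=
  ⨆ x : V, |(∑ y : V, fP G p x y) / (Fintype.card V : ℝ)|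

/-- `ν_{p,G} = max_{x ≠ y} max(0, E_z f_{p,G}(x,z) f_{p,G}(z,y))`. -/
noncomputable def nuP {V : Type*} [Fintype V] (G : SimpleGraph V) [DecidableRel G.Adj]
    (p : ℝ) : ℝ :=
  ⨆ q : {q : V × V // q.1 ≠ q.2},
    max 0 ((∑ z : V, fP G p q.val.1 z * fP G p z q.val.2) / (Fintype.card V : ℝ))


namespace DensityK2aAux

open Finset

variable {V : Type*} [Fintype V]

lemma pow_expand (h : V → ℝ) (k : ℕ) :
    (∑ w, h w) ^ k = ∑ z : Fin k → V, ∏ i, h (z i) := by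
  classical
  rw [Finset.sum_pow' univ h k, Fintype.piFinset_univ]

lemma sum_pow_expand (F : V → V → ℝ) (x y : V) (k : ℕ) :
    (∑ z, F x z * F z y) ^ k = ∑ z : Fin k → V, ∏ i, (F x (z i) * F (z i) y) :=
  pow_expand (fun w => F x w * F w y) k

lemma key_nonneg (F : V → V → ℝ) (hs : ∀ x y, F x y = F y x) (k : ℕ) :
    0 ≤ ∑ x : V, ∑ y : V, (∑ z, F x z * F z y) ^ k := by
  classical
  have h1 : ∀ x y : V, (∑ z, F x z * F z y) ^ k
      = ∑ z : Fin k → V, (∏ i, F x (z i)) * ∏ i, F (z i) y := by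
    intro x y
    rw [sum_pow_expand]
    exact Finset.sum_congr rfl fun z _ => Finset.prod_mul_distrib
  calc (0:ℝ) ≤ ∑ z : Fin k → V, (∑ x, ∏ i, F x (z i)) * (∑ y, ∏ i, F (z i) y) := by
        refine Finset.sum_nonneg fun z _ => ?_
        have : (∑ y, ∏ i, F (z i) y) = ∑ x, ∏ i, F x (z i) := by
          refine Finset.sum_congr rfl fun w _ => ?_
          exact Finset.prod_congr rfl fun i _ => (hs (z i) w)
        rw [this]
        exact mul_self_nonneg _
    _ = ∑ z : Fin k → V, ∑ x, ∑ y, (∏ i, F x (z i)) * ∏ i, F (z i) y := by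
        refine Finset.sum_congr rfl fun z _ => ?_
        rw [Finset.sum_mul_sum]
    _ = ∑ x, ∑ y, (∑ z, F x z * F z y) ^ k := by
        rw [Finset.sum_comm]
        refine Finset.sum_congr rfl fun x _ => ?_
        rw [Finset.sum_comm]
        exact Finset.sum_congr rfl fun y _ => (h1 x y).symm

lemma density_eq (W : V → V → ℝ) (a : ℕ) :
    graphDensity (bipGraph 2 a) W
      = (∑ u : V, ∑ v : V, (∑ w : V, W u w * W v w) ^ a) / (Fintype.card V : ℝ) ^ (2 + a) := by
  classical
  have hcard : Fintype.card (Fin (2 + a)) = 2 + a := Fintype.card_fin _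
  set i0 : Fin (2 + a) := ⟨0, by omega⟩ with hi0
  set i1 : Fin (2 + a) := ⟨1, by omega⟩ with hi1
  set e : Fin a → Fin (2 + a) := fun k => ⟨2 + k.val, by omega⟩ with he
  have hfil : (Finset.univ.filter
      (fun p : Fin (2+a) × Fin (2+a) => p.1 < p.2 ∧ (bipGraph 2 a).Adj p.1 p.2))
      = ({i0, i1} : Finset (Fin (2+a))) ×ˢ (Finset.univ.filter (fun j : Fin (2+a) => 2 ≤ j.val)) := by
    ext p
    simp only [Finset.mem_filter, Finset.mem_univ, true_and, Finset.mem_product,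
      Finset.mem_insert, Finset.mem_singleton, bipGraph, SimpleGraph.fromRel_adj, Fin.lt_def,
      ne_eq, Fin.ext_iff, hi0, hi1]
    omega
  have hB : Finset.univ.filter (fun j : Fin (2+a) => 2 ≤ j.val) = Finset.image e Finset.univ := by
    ext j
    simp only [Finset.mem_filter, Finset.mem_univ, true_and, Finset.mem_image, he]
    constructor
    · intro hj; exact ⟨⟨j.val - 2, by omega⟩, Fin.ext (by simp; omega)⟩
    · rintro ⟨k, rfl⟩; simp
  have heinj : ∀ k ∈ (Finset.univ : Finset (Fin a)), ∀ l ∈ Finset.univ, e k = e l → k = l := by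
    intro k _ l _ hkl
    have := congrArg Fin.val hkl
    simp only [he] at this
    exact Fin.ext (by omega)
  have hprod : ∀ x : Fin (2+a) → V,
      (∏ p ∈ Finset.univ.filter
        (fun p : Fin (2+a) × Fin (2+a) => p.1 < p.2 ∧ (bipGraph 2 a).Adj p.1 p.2),
        W (x p.1) (x p.2))
      = ∏ k : Fin a, (W (x i0) (x (e k)) * W (x i1) (x (e k))) := by
    intro x
    rw [hfil, Finset.prod_product, Finset.prod_insert (by simp [hi0, hi1, Fin.ext_iff]),
      Finset.prod_singleton, hB, Finset.prod_image heinj, Finset.prod_image heinj,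
      ← Finset.prod_mul_distrib]
  let Φ : (Fin (2+a) → V) ≃ (V × V × (Fin a → V)) :=
  { toFun := fun x => (x i0, x i1, fun k => x (e k))
    invFun := fun t => fun i =>
      if h0 : i.val = 0 then t.1 else if h1 : i.val = 1 then t.2.1
      else t.2.2 ⟨i.val - 2, by omega⟩
    left_inv := by
      intro x; funext i
      by_cases h0 : i.val = 0
      · simp only [h0, dif_pos]
        exact congrArg x (Fin.ext (by simp [hi0, h0]))
      · by_cases h1 : i.val = 1
        · simp only [h0, h1, dif_neg, dif_pos, if_true]
          exact congrArg x (Fin.ext (by simp [hi1, h1]))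
        · simp only [h0, h1, dif_neg]
          exact congrArg x (Fin.ext (by simp [he]; omega))
    right_inv := by
      intro t
      refine Prod.ext ?_ (Prod.ext ?_ ?_)
      · simp [hi0]
      · simp [hi1]
      · funext k
        simp only [he]
        have h0 : ¬ (2 + k.val = 0) := by omega
        have h1 : ¬ (2 + k.val = 1) := by omega
        simp only [h0, h1, dif_neg]
        exact congrArg t.2.2 (Fin.ext (by simp))
  }
  have hsum : (∑ x : Fin (2+a) → V, ∏ p ∈ Finset.univ.filter
        (fun p : Fin (2+a) × Fin (2+a) => p.1 < p.2 ∧ (bipGraph 2 a).Adj p.1 p.2),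
        W (x p.1) (x p.2))
      = ∑ u : V, ∑ v : V, (∑ w : V, W u w * W v w) ^ a := by
    rw [Fintype.sum_congr _ _ hprod]
    refine (Fintype.sum_equiv Φ _ (fun t : V × V × (Fin a → V) =>
        ∏ k : Fin a, (W t.1 (t.2.2 k) * W t.2.1 (t.2.2 k))) (fun x => rfl)).trans ?_
    rw [Fintype.sum_prod_type]
    refine Finset.sum_congr rfl fun u _ => ?_
    rw [Fintype.sum_prod_type]
    refine Finset.sum_congr rfl fun v _ => ?_
    rw [pow_expand (fun w => W u w * W v w) a]
  rw [graphDensity, hcard]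
  congr 1

end DensityK2aAux

open DensityK2aAux Finset in
/-- If `G` is a finite simple graph on `n ≥ 1` vertices, `p ∈ (0,1)`, and `a ≥ 1` is an
integer, then `|t_{K_{2,a}}(f_{p,G})| ≤ 2 ν_{p,G}^a + 2 n^{−2/3}`. -/
theorem density_K2a_f_bound {V : Type*} [Fintype V] (G : SimpleGraph V)
    [DecidableRel G.Adj] (n : ℕ) (hn : Fintype.card V = n) (hn1 : 1 ≤ n)
    (p : ℝ) (hp : p ∈ Set.Ioo (0 : ℝ) 1) (a : ℕ) (ha : 1 ≤ a) :
    |graphDensity (bipGraph 2 a) (fP G p)| ≤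
      2 * nuP G p ^ a + 2 * (n : ℝ) ^ (-(2 : ℝ) / 3) := by
  classical
  have hn0 : (0:ℝ) < (n:ℝ) := by exact_mod_cast hn1
  have hNn : ((Fintype.card V : ℕ) : ℝ) = (n : ℝ) := by exact_mod_cast congrArg Nat.cast hn
  set F : V → V → ℝ := fP G p with hF
  have Fsymm : ∀ x y, F x y = F y x := by
    intro x y
    simp only [hF, fP, adjKernel]
    exact congrArg (· - p) (if_congr (G.adj_comm x y) rfl rfl)
  have Fabs : ∀ x y, |F x y| ≤ 1 := by
    intro x y
    simp only [hF, fP, adjKernel]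
    rcases hp with ⟨hp0, hp1⟩
    split_ifs <;> rw [abs_le] <;> constructor <;> linarith
  set c : V → V → ℝ := fun x y => (∑ z, F x z * F z y) / (n:ℝ) with hc
  have hc1 : ∀ x y, |c x y| ≤ 1 := by
    intro x y
    rw [hc]
    simp only
    rw [abs_div, abs_of_pos hn0, div_le_one hn0]
    calc |∑ z, F x z * F z y| ≤ ∑ z, |F x z * F z y| := Finset.abs_sum_le_sum_abs _ _
      _ ≤ ∑ _z : V, (1:ℝ) := by
          refine Finset.sum_le_sum fun z _ => ?_
          rw [abs_mul]
          exact mul_le_one₀ (Fabs x z) (abs_nonneg _) (Fabs z y)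
      _ = (n:ℝ) := by rw [Finset.sum_const, Finset.card_univ, hn]; simp
  set ν : ℝ := nuP G p with hν
  -- basic facts about ν
  have hbdd : BddAbove (Set.range (fun q : {q : V × V // q.1 ≠ q.2} =>
      max 0 ((∑ z : V, fP G p q.val.1 z * fP G p z q.val.2) / (Fintype.card V : ℝ)))) :=
    Set.Finite.bddAbove (Set.finite_range _)
  have hcν : ∀ x y : V, x ≠ y → c x y ≤ ν := by
    intro x y hxy
    have h1 : c x y ≤ max 0 ((∑ z : V, fP G p x z * fP G p z y) / (Fintype.card V : ℝ)) := by
      rw [hc]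
      simp only
      rw [hNn]
      exact le_max_right _ _
    exact h1.trans (le_ciSup hbdd (⟨(x,y), hxy⟩ : {q : V × V // q.1 ≠ q.2}))
  have hν0 : 0 ≤ ν := by
    rcases lt_or_ge 1 (Fintype.card V) with hcard | hcard
    · obtain ⟨x, y, hxy⟩ := Fintype.exists_pair_of_one_lt_card hcard
      have h1 : (0:ℝ) ≤ max 0 ((∑ z : V, fP G p x z * fP G p z y) / (Fintype.card V : ℝ)) :=
        le_max_left _ _
      exact h1.trans (le_ciSup hbdd (⟨(x,y), hxy⟩ : {q : V × V // q.1 ≠ q.2}))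
    · have hsub : Subsingleton V := by
        rw [← Fintype.card_le_one_iff_subsingleton]; exact hcard
      have : IsEmpty {q : V × V // q.1 ≠ q.2} :=
        ⟨fun q => q.2 (Subsingleton.elim _ _)⟩
      rw [hν, nuP, Real.iSup_of_isEmpty]
  -- the density as a double sum of powers of c
  have tEq : graphDensity (bipGraph 2 a) F = (∑ x, ∑ y, (c x y)^a) / (n:ℝ)^2 := by
    rw [density_eq F a, hNn]
    have hW : ∀ u v : V, (∑ w, F u w * F v w) = (n:ℝ) * c u v := by
      intro u v
      rw [hc]
      simp only
      rw [mul_div_cancel₀ _ (ne_of_gt hn0)]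
      exact Finset.sum_congr rfl fun w _ => by rw [Fsymm v w]
    simp only [hW, mul_pow]
    have hpull : (∑ u : V, ∑ v : V, (n:ℝ)^a * (c u v)^a)
        = (n:ℝ)^a * ∑ u : V, ∑ v : V, (c u v)^a := by
      rw [Finset.mul_sum]
      exact Finset.sum_congr rfl fun u _ => (Finset.mul_sum _ _ _).symm
    rw [hpull, pow_add,
      mul_comm ((n:ℝ)^a) (∑ u : V, ∑ v : V, (c u v)^a),
      mul_div_mul_right _ _ (pow_ne_zero a (ne_of_gt hn0))]
  -- epsilon facts
  set ε : ℝ := (n:ℝ) ^ (-(1:ℝ)/3) with hε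
  have hε0 : 0 < ε := Real.rpow_pos_of_pos hn0 _
  have hε3 : ε^3 = ((n:ℝ))⁻¹ := by
    rw [hε, ← Real.rpow_natCast ((n:ℝ) ^ (-(1:ℝ)/3)) 3, ← Real.rpow_mul hn0.le]
    norm_num
    exact Real.rpow_neg_one _
  have hε1 : ε ≤ 1 := Real.rpow_le_one_of_one_le_of_nonpos (by exact_mod_cast hn1) (by norm_num)
  have hgoal2 : (n:ℝ) ^ (-(2:ℝ)/3) = ε^2 := by
    rw [hε, ← Real.rpow_natCast ((n:ℝ) ^ (-(1:ℝ)/3)) 2, ← Real.rpow_mul hn0.le]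
    norm_num
  have hnn : (n:ℝ) = (n:ℝ)^2 * ε^3 := by
    rw [hε3]
    field_simp
  -- positive and negative parts
  set cp : V → V → ℝ := fun x y => max (c x y) 0 with hcp
  set cm : V → V → ℝ := fun x y => max (-(c x y)) 0 with hcm
  have hcp0 : ∀ x y, 0 ≤ cp x y := fun x y => le_max_right _ _
  have hcm0 : ∀ x y, 0 ≤ cm x y := fun x y => le_max_right _ _
  have hcpb : ∀ x y, cp x y ≤ 1 := fun x y =>
    max_le (le_of_abs_le (hc1 x y)) zero_le_one
  have hcmb : ∀ x y, cm x y ≤ 1 := fun x y =>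
    max_le (le_of_abs_le ((abs_neg (c x y)) ▸ hc1 x y)) zero_le_one
  have hcpν : ∀ x y, x ≠ y → cp x y ≤ ν := fun x y hxy => max_le (hcν x y hxy) hν0
  -- moment bound for the positive part
  have hSp : ∀ k : ℕ, (∑ x, ∑ y, cp x y ^ k) ≤ (n:ℝ)^2 * ν^k + n := by
    intro k
    have hx : ∀ x : V, (∑ y, cp x y ^ k) ≤ (n:ℝ) * ν^k + 1 := by
      intro x
      rw [← Finset.add_sum_erase univ _ (Finset.mem_univ x)]
      have h1 : cp x x ^ k ≤ 1 := pow_le_one₀ (hcp0 x x) (hcpb x x)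
      have h2 : (∑ y ∈ univ.erase x, cp x y ^ k) ≤ (n:ℝ) * ν^k := by
        calc (∑ y ∈ univ.erase x, cp x y ^ k) ≤ ∑ _y ∈ univ.erase x, ν^k := by
              refine Finset.sum_le_sum fun y hy => ?_
              exact pow_le_pow_left₀ (hcp0 x y)
                (hcpν x y (Finset.ne_of_mem_erase hy).symm) k
          _ = ((univ.erase x).card : ℝ) * ν^k := by
              rw [Finset.sum_const, nsmul_eq_mul]
          _ ≤ (n:ℝ) * ν^k := by
              refine mul_le_mul_of_nonneg_right ?_ (pow_nonneg hν0 k)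
              have h3 : (univ.erase x).card ≤ n := by
                calc (univ.erase x).card ≤ univ.card := Finset.card_erase_le
                  _ = n := by rw [Finset.card_univ, hn]
              exact_mod_cast h3
      linarith
    calc (∑ x, ∑ y, cp x y ^ k) ≤ ∑ _x : V, ((n:ℝ) * ν^k + 1) :=
          Finset.sum_le_sum fun x _ => hx x
      _ = (n:ℝ) * ((n:ℝ)*ν^k + 1) := by
          rw [Finset.sum_const, Finset.card_univ, hn, nsmul_eq_mul]
      _ = (n:ℝ)^2 * ν^k + n := by ring
  -- parity pointwise identities
  have hodd : ∀ k : ℕ, Odd k → ∀ x y : V, (c x y)^k = cp x y ^ k - cm x y ^ k := by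
    intro k hk x y
    rcases le_total 0 (c x y) with h | h
    · rw [hcp, hcm]
      simp only [max_eq_left h, max_eq_right (neg_nonpos.mpr h)]
      rw [zero_pow hk.pos.ne', sub_zero]
    · rw [hcp, hcm]
      simp only [max_eq_right h, max_eq_left (neg_nonneg.mpr h)]
      rw [zero_pow hk.pos.ne', hk.neg_pow]
      ring
  have heven : ∀ k : ℕ, k ≠ 0 → Even k → ∀ x y : V, (c x y)^k = cp x y ^ k + cm x y ^ k := by
    intro k hk0 hk x y
    rcases le_total 0 (c x y) with h | h
    · rw [hcp, hcm]
      simp only [max_eq_left h, max_eq_right (neg_nonpos.mpr h)]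
      rw [zero_pow hk0, add_zero]
    · rw [hcp, hcm]
      simp only [max_eq_right h, max_eq_left (neg_nonneg.mpr h)]
      rw [zero_pow hk0, hk.neg_pow, zero_add]
  -- positivity of the power sums of c
  have hWc : ∀ x y : V, (∑ z, F x z * F z y) = (n:ℝ) * c x y := by
    intro x y
    rw [hc]
    simp only
    rw [mul_div_cancel₀ _ (ne_of_gt hn0)]
  have hTk : ∀ k : ℕ, 0 ≤ ∑ x, ∑ y, (c x y)^k := by
    intro k
    have h0 := key_nonneg F Fsymm k
    have hrw : (∑ x, ∑ y, (∑ z, F x z * F z y)^k) = (n:ℝ)^k * ∑ x, ∑ y, (c x y)^k := by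
      simp only [hWc, mul_pow]
      rw [Finset.mul_sum]
      exact Finset.sum_congr rfl fun x _ => (Finset.mul_sum _ _ _).symm
    rw [hrw] at h0
    have := pow_pos hn0 k
    nlinarith
  -- odd moments of the negative part are dominated
  have hsplit : ∀ k : ℕ, Odd k →
      (∑ x, ∑ y, (c x y)^k) = (∑ x, ∑ y, cp x y ^ k) - (∑ x, ∑ y, cm x y ^ k) := by
    intro k hk
    rw [← Finset.sum_sub_distrib]
    refine Finset.sum_congr rfl fun x _ => ?_
    rw [← Finset.sum_sub_distrib]
    exact Finset.sum_congr rfl fun y _ => hodd k hk x y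
  have hSm : ∀ k : ℕ, Odd k → (∑ x, ∑ y, cm x y ^ k) ≤ (n:ℝ)^2 * ν^k + n := by
    intro k hk
    have h1 := hTk k
    rw [hsplit k hk] at h1
    linarith [hSp k]
  -- now the main case analysis
  rw [hgoal2, tEq]
  have habsnn : 0 ≤ (∑ x, ∑ y, (c x y)^a) / (n:ℝ)^2 :=
    div_nonneg (hTk a) (by positivity)
  rw [abs_of_nonneg habsnn]
  have hν1 : ν ≤ 1 := by
    rcases lt_or_ge 1 (Fintype.card V) with hcard | hcard
    · have hne : Nonempty {q : V × V // q.1 ≠ q.2} := by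
        obtain ⟨x, y, hxy⟩ := Fintype.exists_pair_of_one_lt_card hcard
        exact ⟨⟨(x,y), hxy⟩⟩
      rw [hν, nuP]
      refine ciSup_le fun q => ?_
      refine max_le zero_le_one ?_
      have := hc1 q.val.1 q.val.2
      rw [hc] at this
      simp only at this
      rw [hNn]
      exact le_of_abs_le this
    · have hsub : Subsingleton V := by
        rw [← Fintype.card_le_one_iff_subsingleton]; exact hcard
      have : IsEmpty {q : V × V // q.1 ≠ q.2} := ⟨fun q => q.2 (Subsingleton.elim _ _)⟩
      rw [hν, nuP, Real.iSup_of_isEmpty]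
      exact zero_le_one
  rcases Nat.even_or_odd a with hae | hao
  · -- even case
    have ha2 : 2 ≤ a := by
      rcases hae with ⟨m, hm⟩
      omega
    by_cases hsmall : n ≤ 2
    · -- trivial branch
      have hbig : (1:ℝ) ≤ 2 * ε^2 := by
        have h12 : (1:ℝ)/2 ≤ ε^3 := by
          rw [hε3, inv_eq_one_div, le_div_iff₀ hn0]
          have h2 : (n:ℝ) ≤ 2 := by exact_mod_cast hsmall
          linarith
        nlinarith [h12, mul_nonneg (sq_nonneg ε) (sub_nonneg.mpr hε1)]
      have hle1 : (∑ x, ∑ y, (c x y)^a) / (n:ℝ)^2 ≤ 1 := by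
        rw [div_le_one (by positivity)]
        calc (∑ x, ∑ y, (c x y)^a) ≤ ∑ x, ∑ y, |(c x y)^a| :=
              Finset.sum_le_sum fun x _ => Finset.sum_le_sum fun y _ => le_abs_self _
          _ ≤ ∑ _x : V, ∑ _y : V, (1:ℝ) := by
              refine Finset.sum_le_sum fun x _ => Finset.sum_le_sum fun y _ => ?_
              rw [abs_pow]
              exact pow_le_one₀ (abs_nonneg _) (hc1 x y)
          _ = (n:ℝ)^2 := by
              simp [Finset.sum_const, Finset.card_univ, hn]
              ring
      have hνa : 0 ≤ ν^a := pow_nonneg hν0 a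
      linarith
    · -- main branch, n ≥ 3
      push_neg at hsmall
      have hε34 : ε ≤ 3/4 := by
        have h1 : ε^3 ≤ (3/4:ℝ)^3 := by
          rw [hε3, inv_eq_one_div, div_le_iff₀ hn0]
          have h2 : (3:ℝ) ≤ (n:ℝ) := by exact_mod_cast hsmall
          nlinarith
        nlinarith [hε0.le, h1, sq_nonneg (ε + 3/4), sq_nonneg (ε - 3/4),
          mul_pos hε0 hε0]
      obtain ⟨d, rfl⟩ : ∃ d, a = d + 2 := ⟨a - 2, by omega⟩
      have hodd1 : Odd (d + 1) := by
        have hd : Even d := by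
          rcases hae with ⟨t, ht⟩
          exact ⟨t - 1, by omega⟩
        exact hd.add_one
      have hodd3 : Odd (d + 3) := by
        rcases hodd1 with ⟨m, hm⟩
        exact ⟨m + 1, by omega⟩
      -- Cauchy-Schwarz
      have hCS : (∑ x, ∑ y, cm x y ^ (d+2))^2
          ≤ (∑ x, ∑ y, cm x y ^ (d+1)) * (∑ x, ∑ y, cm x y ^ (d+3)) := by
        have e1 : ∀ (k:ℕ), (∑ x, ∑ y, cm x y ^ k) = ∑ q : V × V, cm q.1 q.2 ^ k :=
          fun k => (Fintype.sum_prod_type (f := fun q : V × V => cm q.1 q.2 ^ k)).symm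
        rw [e1 (d+2), e1 (d+1), e1 (d+3)]
        have h := Finset.sum_mul_sq_le_sq_mul_sq Finset.univ
          (fun q : V × V => Real.sqrt (cm q.1 q.2 ^ (d+1)))
          (fun q : V × V => Real.sqrt (cm q.1 q.2 ^ (d+3)))
        have h2 : ∀ q : V × V,
            Real.sqrt (cm q.1 q.2 ^ (d+1)) * Real.sqrt (cm q.1 q.2 ^ (d+3))
              = cm q.1 q.2 ^ (d+2) := by
          intro q
          rw [← Real.sqrt_mul (pow_nonneg (hcm0 _ _) _)]
          rw [show cm q.1 q.2^(d+1) * cm q.1 q.2^(d+3) = (cm q.1 q.2 ^ (d+2))^2 by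
            rw [← pow_add, ← pow_mul]; congr 1; omega]
          exact Real.sqrt_sq (pow_nonneg (hcm0 _ _) _)
        have h3 : ∀ q : V × V, Real.sqrt (cm q.1 q.2 ^ (d+1))^2 = cm q.1 q.2 ^ (d+1) :=
          fun q => Real.sq_sqrt (pow_nonneg (hcm0 _ _) _)
        have h4 : ∀ q : V × V, Real.sqrt (cm q.1 q.2 ^ (d+3))^2 = cm q.1 q.2 ^ (d+3) :=
          fun q => Real.sq_sqrt (pow_nonneg (hcm0 _ _) _)
        simp only [h2, h3, h4] at h
        exact h
      -- bounds on odd moments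
      have hM1 : (∑ x, ∑ y, cm x y ^ (d+1)) ≤ (n:ℝ)^2 * (ν^(d+1) + ε^3) := by
        have := hSm (d+1) hodd1
        rw [mul_add]
        calc (∑ x, ∑ y, cm x y ^ (d+1)) ≤ (n:ℝ)^2 * ν^(d+1) + n := this
          _ = (n:ℝ)^2 * ν^(d+1) + (n:ℝ)^2 * ε^3 := by rw [← hnn]
      have hM3 : (∑ x, ∑ y, cm x y ^ (d+3)) ≤ (n:ℝ)^2 * (ν^(d+3) + ε^3) := by
        have := hSm (d+3) hodd3
        rw [mul_add]
        calc (∑ x, ∑ y, cm x y ^ (d+3)) ≤ (n:ℝ)^2 * ν^(d+3) + n := this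
          _ = (n:ℝ)^2 * ν^(d+3) + (n:ℝ)^2 * ε^3 := by rw [← hnn]
      have hM10 : 0 ≤ (∑ x, ∑ y, cm x y ^ (d+1)) :=
        Finset.sum_nonneg fun x _ => Finset.sum_nonneg fun y _ => pow_nonneg (hcm0 x y) _
      have hMa0 : 0 ≤ (∑ x, ∑ y, cm x y ^ (d+2)) :=
        Finset.sum_nonneg fun x _ => Finset.sum_nonneg fun y _ => pow_nonneg (hcm0 x y) _
      -- core polynomial inequality
      set u : ℝ := ν^d with hu
      have hu0 : 0 ≤ u := pow_nonneg hν0 d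
      have hu1 : u ≤ 1 := pow_le_one₀ hν0 hν1
      have hp1 : ν^(d+1) = u * ν := by rw [hu, pow_succ]
      have hp2 : ν^(d+2) = u * ν^2 := by rw [hu, ← pow_add]
      have hp3 : ν^(d+3) = u * ν^3 := by rw [hu, ← pow_add]
      have hcore : (ν^(d+1) + ε^3) * (ν^(d+3) + ε^3)
          ≤ (ν^(d+2) + (2*ε^2 - ε^3))^2 := by
        rw [hp1, hp2, hp3]
        nlinarith [mul_nonneg (mul_nonneg hu0 (sq_nonneg (ν - ε))) (sq_nonneg ε),
          mul_nonneg (sub_nonneg.mpr hu1) (pow_nonneg hε0.le 4),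
          mul_nonneg (mul_nonneg (mul_nonneg hu0 hν0) (pow_nonneg hε0.le 3))
            (sub_nonneg.mpr (by nlinarith [sq_nonneg ν] : ν^2 ≤ 1)),
          mul_nonneg (pow_nonneg hε0.le 4) (sub_nonneg.mpr (by linarith : 4*ε ≤ 3)),
          mul_nonneg (mul_nonneg (mul_nonneg hu0 (sq_nonneg ν)) (sq_nonneg ε))
            (sub_nonneg.mpr hε1)]
      -- conclude S ≤ n² (ν^a + D)
      have hS : (∑ x, ∑ y, cm x y ^ (d+2)) ≤ (n:ℝ)^2 * (ν^(d+2) + (2*ε^2 - ε^3)) := by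
        have hrhs0 : 0 ≤ (n:ℝ)^2 * (ν^(d+2) + (2*ε^2 - ε^3)) := by
          have h5 : (0:ℝ) ≤ ν^(d+2) := pow_nonneg hν0 _
          have h6 : (0:ℝ) ≤ ν^(d+2) + (2*ε^2 - ε^3) := by nlinarith [sq_nonneg ε, hε0.le, hε1]
          exact mul_nonneg (by positivity) h6
        have hsq : (∑ x, ∑ y, cm x y ^ (d+2))^2
            ≤ ((n:ℝ)^2 * (ν^(d+2) + (2*ε^2 - ε^3)))^2 := by
          calc (∑ x, ∑ y, cm x y ^ (d+2))^2
              ≤ (∑ x, ∑ y, cm x y ^ (d+1)) * (∑ x, ∑ y, cm x y ^ (d+3)) := hCS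
            _ ≤ ((n:ℝ)^2 * (ν^(d+1) + ε^3)) * ((n:ℝ)^2 * (ν^(d+3) + ε^3)) := by
                refine mul_le_mul hM1 hM3 ?_ ?_
                · exact Finset.sum_nonneg fun x _ => Finset.sum_nonneg fun y _ =>
                    pow_nonneg (hcm0 x y) _
                · positivity
            _ = (n:ℝ)^4 * ((ν^(d+1) + ε^3) * (ν^(d+3) + ε^3)) := by ring
            _ ≤ (n:ℝ)^4 * (ν^(d+2) + (2*ε^2 - ε^3))^2 := by
                refine mul_le_mul_of_nonneg_left hcore (by positivity)
            _ = ((n:ℝ)^2 * (ν^(d+2) + (2*ε^2 - ε^3)))^2 := by ring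
        nlinarith [hMa0, hrhs0]
      -- total
      have hP : (∑ x, ∑ y, cp x y ^ (d+2)) ≤ (n:ℝ)^2 * (ν^(d+2) + ε^3) := by
        have := hSp (d+2)
        rw [mul_add]
        calc (∑ x, ∑ y, cp x y ^ (d+2)) ≤ (n:ℝ)^2 * ν^(d+2) + n := this
          _ = (n:ℝ)^2 * ν^(d+2) + (n:ℝ)^2 * ε^3 := by rw [← hnn]
      have hsplitE : (∑ x, ∑ y, (c x y)^(d+2))
          = (∑ x, ∑ y, cp x y ^ (d+2)) + (∑ x, ∑ y, cm x y ^ (d+2)) := by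
        rw [← Finset.sum_add_distrib]
        refine Finset.sum_congr rfl fun x _ => ?_
        rw [← Finset.sum_add_distrib]
        exact Finset.sum_congr rfl fun y _ => heven (d+2) (by omega) hae x y
      rw [hsplitE, div_le_iff₀ (by positivity : (0:ℝ) < (n:ℝ)^2)]
      calc (∑ x, ∑ y, cp x y ^ (d+2)) + (∑ x, ∑ y, cm x y ^ (d+2))
          ≤ (n:ℝ)^2 * (ν^(d+2) + ε^3) + (n:ℝ)^2 * (ν^(d+2) + (2*ε^2 - ε^3)) :=
            add_le_add hP hS
        _ = (2 * ν^(d+2) + 2*ε^2) * (n:ℝ)^2 := by ring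
  · -- odd case
    have h1 := hTk a
    have h2 : (∑ x, ∑ y, (c x y)^a) ≤ (n:ℝ)^2 * ν^a + n := by
      rw [hsplit a hao]
      have hSm0 : 0 ≤ (∑ x, ∑ y, cm x y ^ a) :=
        Finset.sum_nonneg fun x _ => Finset.sum_nonneg fun y _ => pow_nonneg (hcm0 x y) _
      linarith [hSp a]
    rw [div_le_iff₀ (by positivity : (0:ℝ) < (n:ℝ)^2)]
    have hνa : 0 ≤ ν^a := pow_nonneg hν0 a
    calc (∑ x, ∑ y, (c x y)^a) ≤ (n:ℝ)^2 * ν^a + n := h2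
      _ = (n:ℝ)^2 * ν^a + (n:ℝ)^2 * ε^3 := by rw [← hnn]
      _ ≤ (2 * ν^a + 2*ε^2) * (n:ℝ)^2 := by nlinarith [sq_nonneg ε, hε0.le, hε1, pow_pos hn0 2]
end

section
/- If G is a finite simple graph on n ≥ 1 vertices, p ∈ (0,1), and b ≥ 1 is an integer, then 0 ≤ t_{K_{2,2b−1}}(f_{p,G}) ≤ ν_{p,G}^{2b−1} + n^{−1}. -/
/-! ### Auxiliary lemmas -/

section Aux
open Finset

lemma aux_sum_pi_prod {ι V : Type*} [Fintype ι] [DecidableEq ι] [Fintype V] (h : ι → V → ℝ) :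
    ∑ y : ι → V, ∏ i, h i (y i) = ∏ i, ∑ v, h i v := by
  rw [Finset.prod_univ_sum, Fintype.piFinset_univ]

lemma aux_sum_pi_prod_const {ι V : Type*} [Fintype ι] [DecidableEq ι] [Fintype V] (h : V → ℝ) :
    ∑ y : ι → V, ∏ i, h (y i) = (∑ v, h v) ^ (Fintype.card ι) := by
  rw [aux_sum_pi_prod]; simp

lemma aux_bip_edge_iff (m : ℕ) (q : Fin (2+m) × Fin (2+m)) :
    (q.1 < q.2 ∧ (bipGraph 2 m).Adj q.1 q.2) ↔ (q.1.val < 2 ∧ 2 ≤ q.2.val) := by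
  simp only [bipGraph, SimpleGraph.fromRel_adj, Fin.lt_def, ne_eq, Fin.ext_iff]
  omega

lemma aux_edge_prod {V : Type*} (m : ℕ) (hm : 1 ≤ m) (W : V → V → ℝ) (x : Fin (2+m) → V)
    {inst : DecidablePred fun q : Fin (2+m) × Fin (2+m) => q.1 < q.2 ∧ (bipGraph 2 m).Adj q.1 q.2} :
    ∏ q ∈ @Finset.filter _ _ inst Finset.univ, W (x q.1) (x q.2)
      = ∏ q : Fin 2 × Fin m, W (x (Fin.castAdd m q.1)) (x (Fin.natAdd 2 q.2)) := by
  classical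
  have hset : @Finset.filter _ _ inst (Finset.univ : Finset (Fin (2+m) × Fin (2+m)))
      = Finset.univ.filter (fun q : Fin (2+m) × Fin (2+m) => q.1.val < 2 ∧ 2 ≤ q.2.val) := by
    ext q; simp [Finset.mem_filter, aux_bip_edge_iff]
  rw [hset]
  refine Finset.prod_nbij' (i := fun q => (⟨q.1.val % 2, Nat.mod_lt _ (by omega)⟩,
      ⟨(q.2.val - 2) % m, Nat.mod_lt _ (by omega)⟩))
    (j := fun q => (Fin.castAdd m q.1, Fin.natAdd 2 q.2)) ?_ ?_ ?_ ?_ ?_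
  · intro a ha; simp
  · intro a _; simp only [Finset.mem_filter, Finset.mem_univ, true_and]
    exact ⟨by simpa using a.1.isLt, by simp⟩
  · intro a ha
    simp only [Finset.mem_filter, Finset.mem_univ, true_and] at ha
    have h1 : a.1.val % 2 = a.1.val := Nat.mod_eq_of_lt ha.1
    have h2 : (a.2.val - 2) % m = a.2.val - 2 := Nat.mod_eq_of_lt (by omega)
    ext <;> simp [h1, h2] <;> omega
  · intro a _
    have h1 : (a.1.val : ℕ) % 2 = a.1.val := Nat.mod_eq_of_lt a.1.isLt
    have h2 : (2 + a.2.val - 2) % m = a.2.val := by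
      rw [show 2 + a.2.val - 2 = a.2.val by omega]; exact Nat.mod_eq_of_lt a.2.isLt
    ext <;> simp [h1, h2, Nat.mod_eq_of_lt a.2.isLt]
  · intro a ha
    simp only [Finset.mem_filter, Finset.mem_univ, true_and] at ha
    have h1 : a.1.val % 2 = a.1.val := Nat.mod_eq_of_lt ha.1
    have h2 : (a.2.val - 2) % m = a.2.val - 2 := Nat.mod_eq_of_lt (by omega)
    congr 2 <;> ext <;> simp [h1, h2] <;> omega

def splitEquiv (m : ℕ) (V : Type*) : ((Fin 2 → V) × (Fin m → V)) ≃ (Fin (2+m) → V) where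
  toFun uy k := if h : k.val < 2 then uy.1 ⟨k.val, h⟩ else uy.2 ⟨k.val - 2, by omega⟩
  invFun x := (fun i => x (Fin.castAdd m i), fun j => x (Fin.natAdd 2 j))
  left_inv := by
    rintro ⟨u, y⟩
    refine Prod.ext (funext fun i => ?_) (funext fun j => ?_)
    · simp [Fin.castAdd, Fin.castLE, i.isLt]
    · have : ¬ ((Fin.natAdd 2 j).val < 2) := by simp; omega
      simp only [this, dif_neg, not_false_iff]
      congr 1; ext; simp
  right_inv := by
    intro x; funext k
    show (if h : k.val < 2 then _ else _) = x k
    by_cases h : k.val < 2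
    · rw [dif_pos h]; exact congrArg x (by ext; simp)
    · rw [dif_neg h]; exact congrArg x (by ext; simp; omega)

lemma splitEquiv_castAdd {m : ℕ} {V : Type*} (u : Fin 2 → V) (y : Fin m → V) (i : Fin 2) :
    splitEquiv m V (u, y) (Fin.castAdd m i) = u i := by
  simp [splitEquiv, Fin.castAdd, Fin.castLE, i.isLt]
  intro h; have := i.isLt; omega

lemma splitEquiv_natAdd {m : ℕ} {V : Type*} (u : Fin 2 → V) (y : Fin m → V) (j : Fin m) :
    splitEquiv m V (u, y) (Fin.natAdd 2 j) = y j := by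
  have : ¬ ((Fin.natAdd 2 j).val < 2) := by simp; omega
  simp only [splitEquiv, Equiv.coe_fn_mk, this, dif_neg, not_false_iff]
  congr 1; ext; simp

lemma aux_sum_split {V : Type*} [Fintype V] (m : ℕ) (W : V → V → ℝ) :
    (∑ x : Fin (2+m) → V, ∏ q : Fin 2 × Fin m,
        W (x (Fin.castAdd m q.1)) (x (Fin.natAdd 2 q.2)))
      = ∑ u : Fin 2 → V, ∑ y : Fin m → V, ∏ q : Fin 2 × Fin m, W (u q.1) (y q.2) := by
  rw [← Equiv.sum_comp (splitEquiv m V)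
    (fun x => ∏ q : Fin 2 × Fin m, W (x (Fin.castAdd m q.1)) (x (Fin.natAdd 2 q.2))),
    Fintype.sum_prod_type]
  simp only [splitEquiv_castAdd, splitEquiv_natAdd]

end Aux

/-- If `G` is a finite simple graph on `n ≥ 1` vertices, `p ∈ (0,1)`, and `b ≥ 1` is an
integer, then `0 ≤ t_{K_{2,2b−1}}(f_{p,G}) ≤ ν_{p,G}^{2b−1} + n⁻¹`. -/
theorem density_K2odd_f_bound {V : Type*} [Fintype V] (G : SimpleGraph V)
    [DecidableRel G.Adj] (n : ℕ) (hn : Fintype.card V = n) (hn1 : 1 ≤ n)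
    (p : ℝ) (hp : p ∈ Set.Ioo (0 : ℝ) 1) (b : ℕ) (hb : 1 ≤ b) :
    0 ≤ graphDensity (bipGraph 2 (2 * b - 1)) (fP G p) ∧
      graphDensity (bipGraph 2 (2 * b - 1)) (fP G p) ≤
        nuP G p ^ (2 * b - 1) + (n : ℝ)⁻¹ := by
  classical
  set m : ℕ := 2 * b - 1 with hm_def
  have hm : 1 ≤ m := by omega
  have hmodd : Odd m := Nat.odd_iff.mpr (by omega)
  set f : V → V → ℝ := fP G p with hf_def
  -- pointwise bound on f
  have hf1 : ∀ x y, |f x y| ≤ 1 := by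
    intro x y
    rw [abs_le]
    simp only [hf_def, fP, adjKernel]
    obtain ⟨hp0, hp1⟩ := hp
    split_ifs <;> constructor <;> linarith
  have hprod1 : ∀ a c v : V, f a v * f c v ≤ 1 := by
    intro a c v
    calc f a v * f c v ≤ |f a v * f c v| := le_abs_self _
    _ = |f a v| * |f c v| := abs_mul _ _
    _ ≤ 1 * 1 := mul_le_mul (hf1 a v) (hf1 c v) (abs_nonneg _) zero_le_one
    _ = 1 := one_mul 1
  set g : V → V → ℝ := fun a c => ∑ v, f a v * f c v with hg_def
  have hn0 : (0:ℝ) < n := by exact_mod_cast hn1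
  have hg_le : ∀ a c, g a c ≤ n := by
    intro a c
    calc g a c ≤ ∑ _v : V, (1:ℝ) := Finset.sum_le_sum fun v _ => hprod1 a c v
    _ = n := by simp [hn]
  -- the big sum
  set S : ℝ := ∑ x : Fin (2+m) → V,
    ∏ q ∈ Finset.univ.filter
      (fun q : Fin (2+m) × Fin (2+m) => q.1 < q.2 ∧ (bipGraph 2 m).Adj q.1 q.2),
      f (x q.1) (x q.2) with hS_def
  have hS : S = ∑ u : Fin 2 → V, ∑ y : Fin m → V,
      ∏ q : Fin 2 × Fin m, f (u q.1) (y q.2) := by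
    rw [hS_def]
    rw [show (∑ x : Fin (2+m) → V, ∏ q ∈ Finset.univ.filter
        (fun q : Fin (2+m) × Fin (2+m) => q.1 < q.2 ∧ (bipGraph 2 m).Adj q.1 q.2),
        f (x q.1) (x q.2))
      = ∑ x : Fin (2+m) → V, ∏ q : Fin 2 × Fin m,
          f (x (Fin.castAdd m q.1)) (x (Fin.natAdd 2 q.2)) from
      Finset.sum_congr rfl fun x _ => aux_edge_prod m hm f x]
    exact aux_sum_split m f
  -- nonnegativity via the square form
  have hSB : S = ∑ y : Fin m → V, (∑ a : V, ∏ j : Fin m, f a (y j)) ^ 2 := by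
    rw [hS, Finset.sum_comm]
    refine Finset.sum_congr rfl fun y _ => ?_
    have key := aux_sum_pi_prod_const (ι := Fin 2) (fun a => ∏ j : Fin m, f a (y j))
    simp only [Fintype.card_fin] at key
    rw [← key]
    refine Finset.sum_congr rfl fun u _ => ?_
    rw [Fintype.prod_prod_type]
  have hS_nonneg : 0 ≤ S := hSB ▸ Finset.sum_nonneg fun y _ => sq_nonneg _
  -- the power form
  have hSA : S = ∑ z : V × V, g z.1 z.2 ^ m := by
    rw [hS]
    have huy : ∀ u : Fin 2 → V, (∑ y : Fin m → V, ∏ q : Fin 2 × Fin m, f (u q.1) (y q.2))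
        = g (u 0) (u 1) ^ m := by
      intro u
      have key := aux_sum_pi_prod_const (ι := Fin m) (fun v => f (u 0) v * f (u 1) v)
      simp only [Fintype.card_fin] at key
      have hgkey : (∑ v : V, f (u 0) v * f (u 1) v) = g (u 0) (u 1) := rfl
      rw [hgkey] at key
      rw [← key]
      refine Finset.sum_congr rfl fun y _ => ?_
      rw [Fintype.prod_prod_type_right]
      exact Finset.prod_congr rfl fun j _ => by rw [Fin.prod_univ_two]
    rw [Finset.sum_congr rfl fun u _ => huy u,
      ← Equiv.sum_comp (piFinTwoEquiv fun _ => V).symm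
        (fun u : Fin 2 → V => g (u 0) (u 1) ^ m)]
    simp [piFinTwoEquiv]
  -- nuP facts
  set ν : ℝ := nuP G p with hν_def
  have hfsymm : ∀ x y : V, f x y = f y x := by
    intro x y
    simp [hf_def, fP, adjKernel, G.adj_comm x y]
  have hbdd : BddAbove (Set.range fun q : {q : V × V // q.1 ≠ q.2} =>
      max 0 ((∑ z : V, fP G p q.val.1 z * fP G p z q.val.2) / (Fintype.card V : ℝ))) :=
    (Set.finite_range _).bddAbove
  have hν_ge : ∀ (a c : V), a ≠ c → max 0 (g a c / n) ≤ ν := by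
    intro a c hac
    have key : g a c = ∑ z : V, fP G p a z * fP G p z c := by
      refine Finset.sum_congr rfl fun z _ => ?_
      rw [show (fP G p a z : ℝ) = f a z from rfl, show (fP G p z c : ℝ) = f z c from rfl,
        hfsymm c z]
    calc max 0 (g a c / n)
        = max 0 ((∑ z : V, fP G p a z * fP G p z c) / (Fintype.card V : ℝ)) := by
          rw [key, hn]
    _ ≤ ν := le_ciSup hbdd ⟨(a,c), hac⟩
  have hν0 : 0 ≤ ν := by
    rcases isEmpty_or_nonempty {q : V × V // q.1 ≠ q.2} with hE | hE
    · rw [hν_def]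
      simp [nuP, Real.iSup_of_isEmpty]
    · obtain ⟨⟨⟨a, c⟩, hac⟩⟩ := hE
      exact le_trans (le_max_left _ _) (hν_ge a c hac)
  -- bound each term
  have hterm : ∀ z : V × V, g z.1 z.2 ^ m ≤ (if z.1 = z.2 then (n:ℝ)^m else (n * ν)^m) := by
    rintro ⟨a, c⟩
    by_cases hac : a = c
    · simp only [hac, if_pos rfl]
      have h0 : 0 ≤ g c c := Finset.sum_nonneg fun v _ => mul_self_nonneg _
      exact pow_le_pow_left₀ h0 (hg_le c c) m
    · simp only [if_neg hac]
      rcases le_or_gt (g a c) 0 with hg0 | hg0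
      · exact le_trans (Odd.pow_nonpos hmodd hg0)
          (pow_nonneg (mul_nonneg hn0.le hν0) m)
      · have hgν : g a c ≤ n * ν := by
          have h1 : g a c / n ≤ ν := le_trans (le_max_right 0 _) (hν_ge a c hac)
          calc g a c = n * (g a c / n) := by field_simp
          _ ≤ n * ν := by
              exact mul_le_mul_of_nonneg_left h1 hn0.le
        exact pow_le_pow_left₀ hg0.le hgν m
  have hS_le : S ≤ (n:ℝ) * (n:ℝ)^m + (n:ℝ)^2 * ((n:ℝ) * ν)^m := by
    rw [hSA]
    calc (∑ z : V × V, g z.1 z.2 ^ m)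
        ≤ ∑ z : V × V, (if z.1 = z.2 then (n:ℝ)^m else (n * ν)^m) :=
          Finset.sum_le_sum fun z _ => hterm z
    _ = (∑ z ∈ Finset.univ.filter (fun z : V × V => z.1 = z.2), (n:ℝ)^m)
          + ∑ z ∈ Finset.univ.filter (fun z : V × V => ¬ z.1 = z.2), ((n:ℝ) * ν)^m :=
          (Finset.sum_ite _ _).trans (by simp)
    _ ≤ (n:ℝ) * (n:ℝ)^m + (n:ℝ)^2 * ((n:ℝ) * ν)^m := by
        have hc1 : ((Finset.univ.filter (fun z : V × V => z.1 = z.2)).card : ℝ) ≤ (n:ℝ) := by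
          have hd : Finset.univ.filter (fun z : V × V => z.1 = z.2)
              = (Finset.univ : Finset V).diag := by
            ext z; simp [Finset.mem_diag]
          rw [hd, Finset.diag_card, Finset.card_univ, hn]
        have hc2 : ((Finset.univ.filter (fun z : V × V => ¬ z.1 = z.2)).card : ℝ)
            ≤ (n:ℝ)^2 := by
          calc ((Finset.univ.filter (fun z : V × V => ¬ z.1 = z.2)).card : ℝ)
              ≤ ((Finset.univ : Finset (V × V)).card : ℝ) := by
                exact_mod_cast Finset.card_le_card (Finset.filter_subset _ _)
          _ = (n:ℝ)^2 := by
                simp [Finset.card_univ, Fintype.card_prod, hn]; ring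
        rw [Finset.sum_const, Finset.sum_const, nsmul_eq_mul, nsmul_eq_mul]
        have h1 : (0:ℝ) ≤ (n:ℝ)^m := by positivity
        have h2 : (0:ℝ) ≤ ((n:ℝ)*ν)^m := by positivity
        exact add_le_add (mul_le_mul_of_nonneg_right hc1 h1)
          (mul_le_mul_of_nonneg_right hc2 h2)
  -- relate graphDensity to S
  have hdens : graphDensity (bipGraph 2 m) f = S / (n:ℝ)^(2+m) := by
    unfold graphDensity
    rw [hn, Fintype.card_fin]
  have hpow_pos : (0:ℝ) < (n:ℝ)^(2+m) := by positivity
  constructor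
  · rw [hdens]
    exact div_nonneg hS_nonneg hpow_pos.le
  · rw [hdens, div_le_iff₀ hpow_pos]
    calc S ≤ (n:ℝ) * (n:ℝ)^m + (n:ℝ)^2 * ((n:ℝ) * ν)^m := hS_le
    _ = (ν ^ m + (n:ℝ)⁻¹) * (n:ℝ)^(2+m) := by
        rw [mul_pow, pow_add]
        field_simp
        ring
end

section
/- Let H be a finite graph, p ∈ ℝ, and f : Ω² → ℝ a symmetric bounded measurable function on a probability space Ω. Then t_H(p + f) = Σ_J p^{e(H)−e(J)} · C_{H,J} · t_J(f), where the sum is over isomorphism classes of graphs J with no isolated vertices (including the empty graph), e(J) is the number of edges of J, and C_{H,J} is the number of subgraphs of H isomorphic to J. -/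
open MeasureTheory

/- The `H`-density `t_H(W)` for real-valued `W` on a probability space `Ω`. -/
open scoped Classical in
noncomputable def graphonDensity {K : Type*} [Fintype K] [LinearOrder K] (H : SimpleGraph K)
    {Ω : Type*} [MeasureSpace Ω] (W : Ω → Ω → ℝ) : ℝ :=
  ∫ x : K → Ω, ∏ p ∈ Finset.univ.filter (fun p : K × K => p.1 < p.2 ∧ H.Adj p.1 p.2),
    W (x p.1) (x p.2)

private lemma pair_eq_of_sym2 {K : Type*} [LinearOrder K] {a b c d : K}
    (hab : a < b) (hcd : c < d) (h : s(a, b) = s(c, d)) : (a, b) = (c, d) := by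
  replace h := (Sym2.mk_eq_mk_iff (p := (a, b)) (q := (c, d))).mp h
  rcases h with h | h
  · exact h
  · simp only [Prod.ext_iff, Prod.swap] at h ⊢
    obtain ⟨h1, h2⟩ := h
    subst h1; subst h2
    exact absurd hcd (lt_asymm hab)

private lemma graphonDensity_eq_prod {K : Type*} [Fintype K] [LinearOrder K]
    (H : SimpleGraph K) {Ω : Type*} [MeasureSpace Ω] (W : Ω → Ω → ℝ) (T : Finset (K × K))
    (hT : ∀ q : K × K, q ∈ T ↔ (q.1 < q.2 ∧ H.Adj q.1 q.2)) :
    graphonDensity H W = ∫ x : K → Ω, ∏ q ∈ T, W (x q.1) (x q.2) := by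
  rw [graphonDensity]
  refine integral_congr_ae (Filter.Eventually.of_forall fun x => ?_)
  refine Finset.prod_congr ?_ fun _ _ => rfl
  ext q
  simp [hT q]

/-- Expansion of `t_H(p + f)`.  The sum over isomorphism classes `J` of graphs with no
isolated vertices, `t_H(p + f) = Σ_J p^{e(H)−e(J)} C_{H,J} t_J(f)` (where `C_{H,J}` is the
number of subgraphs of `H` isomorphic to `J`, and the empty graph contributes `p^{e(H)}`),
is stated here by enumerating the subgraphs themselves: a subgraph of `H` with no isolated
vertices is precisely determined by a subset `s` of the edges of `H`, its density `t_J(f)`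
being that of the graph with edge set `s` (isolated vertices do not affect densities over a
probability space). -/
theorem density_expansion {Ω : Type*} [MeasureSpace Ω]
    [IsProbabilityMeasure (volume : Measure Ω)]
    (f : Ω → Ω → ℝ) (hfsymm : ∀ x y, f x y = f y x)
    (hfmeas : Measurable (Function.uncurry f)) (hfbdd : ∃ C : ℝ, ∀ x y, |f x y| ≤ C)
    {K : Type*} [Fintype K] [LinearOrder K] [DecidableEq K]
    (H : SimpleGraph K) [DecidableRel H.Adj] (p : ℝ) :
    graphonDensity H (fun x y => p + f x y) =
      ∑ s ∈ H.edgeFinset.powerset,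
        p ^ (H.edgeFinset.card - s.card) *
          graphonDensity (SimpleGraph.fromEdgeSet (s : Set (Sym2 K))) f := by
  classical
  obtain ⟨C, hC⟩ := hfbdd
  set E : Finset (K × K) := Finset.univ.filter (fun q : K × K => q.1 < q.2 ∧ H.Adj q.1 q.2)
    with hE
  have hmemE : ∀ q : K × K, q ∈ E ↔ q.1 < q.2 ∧ H.Adj q.1 q.2 := by
    intro q; rw [hE, Finset.mem_filter]; simp
  have hmeas : ∀ (a b : K), Measurable (fun x : K → Ω => f (x a) (x b)) := by
    intro a b
    have h1 : Measurable fun x : K → Ω => (x a, x b) :=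
      (measurable_pi_apply a).prodMk (measurable_pi_apply b)
    exact hfmeas.comp h1
  have hint : ∀ T : Finset (K × K),
      Integrable (fun x : K → Ω => ∏ q ∈ T, f (x q.1) (x q.2)) := by
    intro T
    refine Integrable.mono' (integrable_const (|C| ^ T.card))
      (Finset.measurable_prod T fun q _ => hmeas q.1 q.2).aestronglyMeasurable
      (Filter.Eventually.of_forall fun x => ?_)
    rw [Real.norm_eq_abs, Finset.abs_prod]
    calc ∏ q ∈ T, |f (x q.1) (x q.2)| ≤ ∏ q ∈ T, |C| :=
          Finset.prod_le_prod (fun q _ => abs_nonneg _)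
            (fun q _ => (hC _ _).trans (le_abs_self C))
      _ = |C| ^ T.card := Finset.prod_const _
  have hinj : ∀ q ∈ E, ∀ q' ∈ E, s(q.1, q.2) = s(q'.1, q'.2) → q = q' := by
    intro q hq q' hq' h
    rw [hmemE] at hq hq'
    have := pair_eq_of_sym2 hq.1 hq'.1 h
    rwa [Prod.mk.eta, Prod.mk.eta] at this
  have himage : E.image (fun q : K × K => s(q.1, q.2)) = H.edgeFinset := by
    ext e
    simp only [Finset.mem_image, SimpleGraph.mem_edgeFinset]
    constructor
    · rintro ⟨q, hq, rfl⟩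
      exact ((hmemE q).1 hq).2
    · intro he
      induction e with
      | _ a b =>
        rw [SimpleGraph.mem_edgeSet] at he
        rcases lt_or_gt_of_ne he.ne with h | h
        · exact ⟨(a, b), (hmemE _).2 ⟨h, he⟩, rfl⟩
        · exact ⟨(b, a), (hmemE _).2 ⟨h, he.symm⟩, Sym2.eq_swap⟩
  have hEcard : E.card = H.edgeFinset.card := by
    rw [← himage]
    exact (Finset.card_image_of_injOn fun q hq q' hq' h => hinj q hq q' hq' h).symm
  have key : graphonDensity H (fun x y => p + f x y) =
      ∑ T ∈ E.powerset, p ^ (E.card - T.card) * ∫ x : K → Ω, ∏ q ∈ T, f (x q.1) (x q.2) := by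
    rw [graphonDensity_eq_prod H _ E (fun q => by rw [hmemE])]
    have hexp : ∀ x : K → Ω, ∏ q ∈ E, (p + f (x q.1) (x q.2)) =
        ∑ T ∈ E.powerset, p ^ (E.card - T.card) * ∏ q ∈ T, f (x q.1) (x q.2) := by
      intro x
      rw [Finset.prod_congr rfl (fun q _ => add_comm p (f (x q.1) (x q.2))),
        Finset.prod_add]
      refine Finset.sum_congr rfl fun T hT => ?_
      rw [Finset.mem_powerset] at hT
      rw [Finset.prod_const, Finset.card_sdiff_of_subset hT, mul_comm]
    rw [integral_congr_ae (Filter.Eventually.of_forall hexp),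
      integral_finset_sum _ (fun T _ => (hint T).const_mul _)]
    exact Finset.sum_congr rfl fun T _ => integral_const_mul _ _
  rw [key]
  refine Finset.sum_nbij' (i := fun T => T.image (fun q : K × K => s(q.1, q.2)))
    (j := fun s => E.filter (fun q => s(q.1, q.2) ∈ s)) ?_ ?_ ?_ ?_ ?_
  · -- maps into
    intro T hT
    rw [Finset.mem_powerset] at hT ⊢
    rw [← himage]
    exact Finset.image_subset_image hT
  · intro s _
    rw [Finset.mem_powerset]
    exact Finset.filter_subset _ _
  · -- j (i T) = T
    intro T hT
    rw [Finset.mem_powerset] at hT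
    ext q
    simp only [Finset.mem_filter, Finset.mem_image]
    constructor
    · rintro ⟨hqE, q', hq', hqq'⟩
      have := hinj q' (hT hq') q hqE hqq'
      exact this ▸ hq'
    · intro hq
      exact ⟨hT hq, q, hq, rfl⟩
  · -- i (j s) = s
    intro s hs
    rw [Finset.mem_powerset] at hs
    ext e
    simp only [Finset.mem_image, Finset.mem_filter]
    constructor
    · rintro ⟨q, ⟨_, hq⟩, rfl⟩
      exact hq
    · intro he
      have hadj : e ∈ H.edgeSet := SimpleGraph.mem_edgeFinset.1 (hs he)
      induction e with
      | _ a b =>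
        rw [SimpleGraph.mem_edgeSet] at hadj
        rcases lt_or_gt_of_ne hadj.ne with h | h
        · exact ⟨(a, b), ⟨(hmemE _).2 ⟨h, hadj⟩, he⟩, rfl⟩
        · exact ⟨(b, a), ⟨(hmemE _).2 ⟨h, hadj.symm⟩, by rwa [← Sym2.eq_swap]⟩,
            Sym2.eq_swap⟩
  · -- values agree
    intro T hT
    rw [Finset.mem_powerset] at hT
    have hcard : (T.image (fun q : K × K => s(q.1, q.2))).card = T.card :=
      Finset.card_image_of_injOn fun q hq q' hq' h => hinj q (hT hq) q' (hT hq') h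
    rw [hcard, hEcard]
    congr 1
    rw [graphonDensity_eq_prod _ f T]
    intro q
    simp only [SimpleGraph.fromEdgeSet_adj, Finset.coe_image, Set.mem_image,
      Finset.mem_coe]
    constructor
    · intro hq
      have h1 := (hmemE q).1 (hT hq)
      exact ⟨h1.1, ⟨q, hq, rfl⟩, h1.1.ne⟩
    · rintro ⟨hlt, ⟨q', hq', hqq'⟩, -⟩
      have h1 := (hmemE q').1 (hT hq')
      have := pair_eq_of_sym2 h1.1 hlt hqq'
      rw [Prod.mk.eta, Prod.mk.eta] at this
      exact this ▸ hq'
end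

section
/- Let G be a finite simple graph containing no clique of size k+1 and no independent set of size ℓ+1, and let r ≥ 2 be an integer with k + 2 − r ≥ 1. Then every clique of size r−1 in G is contained in strictly fewer than R(k+2−r, ℓ+1) cliques of size r; equivalently, for every clique S of size r−1, the number of vertices adjacent to all of S is strictly less than R(k+2−r, ℓ+1). -/
/-- `RamseyProp n k l` : every simple graph on `n` vertices contains a clique of size `k`
or an independent set of size `l`. -/
def RamseyProp (n k l : ℕ) : Prop :=
  ∀ G : SimpleGraph (Fin n), (∃ s, G.IsNClique k s) ∨ (∃ s, Gᶜ.IsNClique l s)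

/-- The Ramsey number `R(k, l)`. -/
noncomputable def ramseyNumber (k l : ℕ) : ℕ := sInf {n | RamseyProp n k l}

lemma isNClique_of_comap {α β : Type*} [DecidableEq β] {f : α → β} (hf : Function.Injective f)
    {G : SimpleGraph β} {m : ℕ} {s : Finset α} (h : (G.comap f).IsNClique m s) :
    G.IsNClique m (s.image f) := by
  constructor
  · rintro x hx y hy hxy
    rw [Finset.coe_image] at hx hy
    obtain ⟨a, ha, rfl⟩ := hx
    obtain ⟨b, hb, rfl⟩ := hy
    exact h.1 ha hb (fun e => hxy (congrArg f e))
  · rw [Finset.card_image_of_injective _ hf, h.2]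

lemma comap_compl {α β : Type*} {f : α → β} (hf : Function.Injective f)
    (G : SimpleGraph β) : (G.comap f)ᶜ = Gᶜ.comap f := by
  ext x y
  simp [SimpleGraph.compl_adj, hf.ne_iff]

lemma ramsey_subset {V : Type*} [Fintype V] [DecidableEq V] (G : SimpleGraph V)
    (N : Finset V) {a k l : ℕ} (hR : RamseyProp a k l) (ha : a ≤ N.card) :
    (∃ s : Finset V, s ⊆ N ∧ G.IsNClique k s) ∨
      (∃ s : Finset V, s ⊆ N ∧ Gᶜ.IsNClique l s) := by
  obtain ⟨N', hN'sub, hN'card⟩ := Finset.exists_subset_card_eq ha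
  let e : N' ≃ Fin a := N'.equivFinOfCardEq hN'card
  let f : Fin a → V := fun i => (e.symm i : V)
  have hf : Function.Injective f := fun i j h => e.symm.injective (Subtype.ext h)
  have himg : ∀ s : Finset (Fin a), s.image f ⊆ N := by
    intro s x hx
    obtain ⟨i, _, rfl⟩ := Finset.mem_image.1 hx
    exact hN'sub (e.symm i).2
  rcases hR (G.comap f) with ⟨s, hs⟩ | ⟨s, hs⟩
  · exact Or.inl ⟨s.image f, himg s, isNClique_of_comap hf hs⟩
  · rw [comap_compl hf] at hs
    exact Or.inr ⟨s.image f, himg s, isNClique_of_comap hf hs⟩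

theorem ramsey_exists (k l : ℕ) : ∃ n, 0 < n ∧ RamseyProp n k l := by
  induction k generalizing l with
  | zero =>
    exact ⟨1, one_pos, fun G => Or.inl ⟨∅, by simp⟩⟩
  | succ k ihk =>
    induction l with
    | zero =>
      exact ⟨1, one_pos, fun G => Or.inr ⟨∅, by simp⟩⟩
    | succ l ihl =>
      obtain ⟨a, ha, hA⟩ := ihk (l + 1)
      obtain ⟨b, hb, hB⟩ := ihl
      refine ⟨a + b, by omega, fun G => ?_⟩
      classical
      set v : Fin (a + b) := ⟨0, by omega⟩ with hv
      set N : Finset (Fin (a + b)) := Finset.univ.filter (fun w => G.Adj v w) with hN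
      set M : Finset (Fin (a + b)) :=
        Finset.univ.filter (fun w => v ≠ w ∧ ¬ G.Adj v w) with hM
      have hvN : v ∉ N := by simp [hN]
      have hvM : v ∉ M := by simp [hM]
      have hdisj : Disjoint N M := by
        rw [Finset.disjoint_left]
        intro w hwN hwM
        rw [hN, Finset.mem_filter] at hwN
        rw [hM, Finset.mem_filter] at hwM
        exact hwM.2.2 hwN.2
      have hcover : Finset.univ ⊆ insert v (N ∪ M) := by
        intro w _
        by_cases hw : w = v
        · simp [hw]
        · by_cases hadj : G.Adj v w
          · simp [Finset.mem_insert, hN, hadj]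
          · simp [Finset.mem_insert, hM, hadj, Ne.symm hw]
      have hcard : a + b ≤ N.card + M.card + 1 := by
        have := Finset.card_le_card hcover
        rw [Finset.card_univ, Fintype.card_fin] at this
        calc a + b ≤ (insert v (N ∪ M)).card := this
          _ ≤ N.card + M.card + 1 := by
            have h1 := Finset.card_insert_le v (N ∪ M)
            have h2 := Finset.card_union_le N M
            omega
      have key : a ≤ N.card ∨ b ≤ M.card := by omega
      rcases key with hNa | hMb
      · rcases ramsey_subset G N hA hNa with ⟨s, hsN, hs⟩ | ⟨s, hsN, hs⟩
        · left
          refine ⟨insert v s, ?_, ?_⟩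
          · intro x hx y hy hxy
            rcases Finset.mem_insert.1 hx with rfl | hx
            · rcases Finset.mem_insert.1 hy with rfl | hy
              · exact absurd rfl hxy
              · exact (Finset.mem_filter.1 (hsN hy)).2
            · rcases Finset.mem_insert.1 hy with rfl | hy
              · exact ((Finset.mem_filter.1 (hsN hx)).2).symm
              · exact hs.1 hx hy hxy
          · rw [Finset.card_insert_of_notMem (fun h => hvN (hsN h)), hs.2]
        · exact Or.inr ⟨s, hs⟩
      · rcases ramsey_subset G M hB hMb with ⟨s, hsM, hs⟩ | ⟨s, hsM, hs⟩
        · exact Or.inl ⟨s, hs⟩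
        · right
          refine ⟨insert v s, ?_, ?_⟩
          · intro x hx y hy hxy
            rcases Finset.mem_insert.1 hx with rfl | hx
            · rcases Finset.mem_insert.1 hy with rfl | hy
              · exact absurd rfl hxy
              · have := Finset.mem_filter.1 (hsM hy)
                exact ⟨this.2.1, this.2.2⟩
            · rcases Finset.mem_insert.1 hy with rfl | hy
              · have := Finset.mem_filter.1 (hsM hx)
                exact ((SimpleGraph.compl_adj _ _ _).2 ⟨this.2.1, this.2.2⟩).symm
              · exact hs.1 hx hy hxy
          · rw [Finset.card_insert_of_notMem (fun h => hvM (hsM h)), hs.2]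

open scoped Classical in
/-- If `G` has no clique of size `k+1` and no independent set of size `ℓ+1`, and `r ≥ 2`
with `k + 2 − r ≥ 1`, then for every clique `S` of size `r−1` in `G`, the number of
vertices adjacent to all of `S` is strictly less than `R(k+2−r, ℓ+1)`; equivalently,
`S` is contained in strictly fewer than `R(k+2−r, ℓ+1)` cliques of size `r`. -/
theorem clique_extension_bound {V : Type*} [Fintype V] (G : SimpleGraph V)
    (k l r : ℕ) (hG : G.CliqueFree (k + 1)) (hG' : Gᶜ.CliqueFree (l + 1))
    (hr : 2 ≤ r) (hrk : r ≤ k + 1) :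
    ∀ S : Finset V, G.IsNClique (r - 1) S →
      (Finset.univ.filter (fun v : V => ∀ s ∈ S, G.Adj v s)).card <
        ramseyNumber (k + 2 - r) (l + 1) := by
  intro S hS
  set T := Finset.univ.filter (fun v : V => ∀ s ∈ S, G.Adj v s) with hT
  -- the set defining the Ramsey number is nonempty
  obtain ⟨n0, _, hn0⟩ := ramsey_exists (k + 2 - r) (l + 1)
  have hne : {n | RamseyProp n (k + 2 - r) (l + 1)}.Nonempty := ⟨n0, hn0⟩
  have hmem := Nat.sInf_mem hne
  set m := sInf {n | RamseyProp n (k + 2 - r) (l + 1)} with hm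
  by_contra hlt
  push_neg at hlt
  -- so m ≤ T.card, and RamseyProp m holds
  have hR : RamseyProp m (k + 2 - r) (l + 1) := hmem
  rcases ramsey_subset G T hR hlt with ⟨s, hsT, hs⟩ | ⟨s, hsT, hs⟩
  · -- clique of size k+2-r inside common neighborhood: extend by S
    have hST : ∀ x ∈ s, x ∉ S := by
      intro x hx hxS
      have hxT := Finset.mem_filter.1 (hsT hx)
      exact G.loopless.irrefl x (hxT.2 x hxS)
    have hdisj : Disjoint s S := Finset.disjoint_left.2 hST
    have hclique : G.IsNClique (k + 1) (s ∪ S) := by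
      constructor
      · intro x hx y hy hxy
        rcases Finset.mem_union.1 hx with hx' | hx'
        · rcases Finset.mem_union.1 hy with hy' | hy'
          · exact hs.1 hx' hy' hxy
          · exact (Finset.mem_filter.1 (hsT hx')).2 y hy'
        · rcases Finset.mem_union.1 hy with hy' | hy'
          · exact ((Finset.mem_filter.1 (hsT hy')).2 x hx').symm
          · exact hS.1 hx' hy' hxy
      · rw [Finset.card_union_of_disjoint hdisj, hs.2, hS.2]
        omega
    exact hG _ hclique
  · exact hG' _ hs
end

section
/- For every integer r ≥ 5 and ε ∈ (0, 1/2), the function ρ_{r,ε} is twice differentiable on (0,∞), satisfies 0 ≤ ρ_{r,ε}(x) ≤ (r−4)·x/2 for all x ∈ [0,1], and its first and second derivatives satisfy ‖ρ_{r,ε}′‖_∞ ≤ r and ‖ρ_{r,ε}″‖_∞ ≤ 10r. -/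
/-- `τ(x) = 6x⁵ − 15x⁴ + 10x³`. -/
noncomputable def tauPoly (x : ℝ) : ℝ := 6 * x ^ 5 - 15 * x ^ 4 + 10 * x ^ 3

/-- The branch of `ρ_{r,ε}` on `[0,1]`: `0` on `[0,ε]` and
`(r−4)·τ((x−ε)/(1−ε))/4` on `[ε,1]`. -/
noncomputable def rhoAux (r : ℕ) (ε : ℝ) (y : ℝ) : ℝ :=
  if y ≤ ε then 0 else ((r : ℝ) - 4) * tauPoly ((y - ε) / (1 - ε)) / 4

/-- `ρ_{r,ε}(x)`: equals `rhoAux` for `x ≤ 1` and `ρ_{r,ε}(1/x)` for `x ≥ 1`. -/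
noncomputable def rho (r : ℕ) (ε : ℝ) (x : ℝ) : ℝ :=
  if x ≤ 1 then rhoAux r ε x else rhoAux r ε x⁻¹

namespace RhoProof

open Set Filter

noncomputable def tau2 (s : ℝ) : ℝ := 30 * s ^ 4 - 60 * s ^ 3 + 30 * s ^ 2
noncomputable def tau3 (s : ℝ) : ℝ := 120 * s ^ 3 - 180 * s ^ 2 + 60 * s

lemma hasDerivAt_tauPoly (s : ℝ) : HasDerivAt tauPoly (tau2 s) s := by
  have h : HasDerivAt (fun x : ℝ => 6 * x ^ 5 - 15 * x ^ 4 + 10 * x ^ 3)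
      (6 * (↑5 * s ^ 4) - 15 * (↑4 * s ^ 3) + 10 * (↑3 * s ^ 2)) s :=
    (((hasDerivAt_pow 5 s).const_mul 6).sub ((hasDerivAt_pow 4 s).const_mul 15)).add
      ((hasDerivAt_pow 3 s).const_mul 10)
  refine h.congr_deriv ?_
  unfold tau2; push_cast; ring

lemma hasDerivAt_tau2 (s : ℝ) : HasDerivAt tau2 (tau3 s) s := by
  have h : HasDerivAt (fun x : ℝ => 30 * x ^ 4 - 60 * x ^ 3 + 30 * x ^ 2)
      (30 * (↑4 * s ^ 3) - 60 * (↑3 * s ^ 2) + 30 * (↑2 * s ^ 1)) s :=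
    (((hasDerivAt_pow 4 s).const_mul 30).sub ((hasDerivAt_pow 3 s).const_mul 60)).add
      ((hasDerivAt_pow 2 s).const_mul 30)
  refine h.congr_deriv ?_
  unfold tau3; push_cast; ring

noncomputable def f1 (r : ℕ) (ε y : ℝ) : ℝ := ((r : ℝ) - 4) * tauPoly ((y - ε) / (1 - ε)) / 4
noncomputable def f1d (r : ℕ) (ε y : ℝ) : ℝ :=
  ((r : ℝ) - 4) * tau2 ((y - ε) / (1 - ε)) / 4 / (1 - ε)
noncomputable def f1dd (r : ℕ) (ε y : ℝ) : ℝ :=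
  ((r : ℝ) - 4) * tau3 ((y - ε) / (1 - ε)) / 4 / (1 - ε) / (1 - ε)

noncomputable def rA1 (r : ℕ) (ε y : ℝ) : ℝ := if y ≤ ε then 0 else f1d r ε y
noncomputable def rA2 (r : ℕ) (ε y : ℝ) : ℝ := if y ≤ ε then 0 else f1dd r ε y
noncomputable def rho1 (r : ℕ) (ε x : ℝ) : ℝ :=
  if x ≤ 1 then rA1 r ε x else -rA1 r ε x⁻¹ / x ^ 2
noncomputable def rho2 (r : ℕ) (ε x : ℝ) : ℝ :=
  if x ≤ 1 then rA2 r ε x else rA2 r ε x⁻¹ / x ^ 4 + 2 * rA1 r ε x⁻¹ / x ^ 3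

variable {r : ℕ} {ε : ℝ}

lemma hasDerivAt_inner (y : ℝ) :
    HasDerivAt (fun y : ℝ => (y - ε) / (1 - ε)) (1 / (1 - ε)) y :=
  ((hasDerivAt_id y).sub_const ε).div_const _

lemma hasDerivAt_f1 (y : ℝ) : HasDerivAt (f1 r ε) (f1d r ε y) y := by
  have h := (((hasDerivAt_tauPoly ((y - ε) / (1 - ε))).comp y
    (hasDerivAt_inner y)).const_mul ((r : ℝ) - 4)).div_const 4
  refine h.congr_deriv ?_
  unfold f1d; ring

lemma hasDerivAt_f1d (y : ℝ) : HasDerivAt (f1d r ε) (f1dd r ε y) y := by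
  have h := ((((hasDerivAt_tau2 ((y - ε) / (1 - ε))).comp y
    (hasDerivAt_inner y)).const_mul ((r : ℝ) - 4)).div_const 4).div_const (1 - ε)
  refine h.congr_deriv ?_
  unfold f1dd; ring

lemma tau2_one : tau2 1 = 0 := by norm_num [tau2]
lemma tau3_one : tau3 1 = 0 := by norm_num [tau3]

lemma f1_eps : f1 r ε ε = 0 := by norm_num [f1, tauPoly]
lemma f1d_eps : f1d r ε ε = 0 := by norm_num [f1d, tau2]
lemma f1dd_eps : f1dd r ε ε = 0 := by unfold f1dd tau3; norm_num

lemma inner_one (hε1 : ε < 1) : (1 - ε) / (1 - ε) = 1 :=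
  div_self (ne_of_gt (by linarith : (0:ℝ) < 1 - ε))

lemma f1d_one (hε1 : ε < 1) : f1d r ε 1 = 0 := by
  unfold f1d; rw [inner_one hε1, tau2_one]; ring

lemma f1dd_one (hε1 : ε < 1) : f1dd r ε 1 = 0 := by
  unfold f1dd; rw [inner_one hε1, tau3_one]; ring

lemma rho_eq_zero (hε1 : ε < 1) {y : ℝ} (hy : y ≤ ε) : rho r ε y = 0 := by
  unfold rho rhoAux
  rw [if_pos (hy.trans hε1.le), if_pos hy]

lemma rho_eq_f1 {y : ℝ} (hy1 : ε < y) (hy2 : y ≤ 1) : rho r ε y = f1 r ε y := by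
  unfold rho rhoAux f1
  rw [if_pos hy2, if_neg (not_le.mpr hy1)]

lemma inv_gt_eps (hε0 : 0 < ε) {y : ℝ} (hy1 : 1 < y) (hy2 : y < ε⁻¹) : ε < y⁻¹ := by
  have hy0 : 0 < y := lt_trans one_pos hy1
  rw [show y⁻¹ = 1 / y from (one_div y).symm, lt_div_iff₀ hy0]
  have h := mul_lt_mul_of_pos_left hy2 hε0
  rwa [mul_inv_cancel₀ (ne_of_gt hε0)] at h

lemma rho_eq_f1_inv (hε0 : 0 < ε) {y : ℝ} (hy1 : 1 < y) (hy2 : y < ε⁻¹) :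
    rho r ε y = f1 r ε y⁻¹ := by
  unfold rho rhoAux f1
  rw [if_neg (not_le.mpr hy1), if_neg (not_le.mpr (inv_gt_eps hε0 hy1 hy2))]

lemma rho1_eq_rA1 {x : ℝ} (hx : x ≤ 1) : rho1 r ε x = rA1 r ε x := if_pos hx
lemma rho2_eq_rA2 {x : ℝ} (hx : x ≤ 1) : rho2 r ε x = rA2 r ε x := if_pos hx
lemma rA1_eq_zero {x : ℝ} (hx : x ≤ ε) : rA1 r ε x = 0 := if_pos hx
lemma rA2_eq_zero {x : ℝ} (hx : x ≤ ε) : rA2 r ε x = 0 := if_pos hx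
lemma rA1_eq_f1d {x : ℝ} (hx : ε < x) : rA1 r ε x = f1d r ε x := if_neg (not_le.mpr hx)
lemma rA2_eq_f1dd {x : ℝ} (hx : ε < x) : rA2 r ε x = f1dd r ε x := if_neg (not_le.mpr hx)

lemma rho1_eq_zero (hε1 : ε < 1) {x : ℝ} (hx : x ≤ ε) : rho1 r ε x = 0 := by
  rw [rho1_eq_rA1 (hx.trans hε1.le), rA1_eq_zero hx]

lemma rho1_inv_form {x : ℝ} (hx : 1 < x) : rho1 r ε x = -rA1 r ε x⁻¹ / x ^ 2 :=
  if_neg (not_le.mpr hx)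

lemma glue {f : ℝ → ℝ} {a d : ℝ} (hl : HasDerivWithinAt f d (Iic a) a)
    (hr : HasDerivWithinAt f d (Ici a) a) : HasDerivAt f d a := by
  have h := hl.union hr
  rw [Iic_union_Ici] at h
  exact hasDerivWithinAt_univ.mp h

lemma seam_eps (hε0 : 0 < ε) (hε1 : ε < 1) : HasDerivAt (rho r ε) 0 ε := by
  apply glue
  · exact ((hasDerivAt_const ε (0 : ℝ)).hasDerivWithinAt).congr
      (fun y hy => rho_eq_zero hε1 hy) (rho_eq_zero hε1 le_rfl)
  · have hf := (hasDerivAt_f1 (r := r) (ε := ε) ε).hasDerivWithinAt (s := Ici ε)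
    rw [f1d_eps] at hf
    refine hf.congr_of_eventuallyEq ?_ (by rw [rho_eq_zero hε1 le_rfl, f1_eps])
    filter_upwards [Ico_mem_nhdsGE_of_mem (⟨le_refl ε, hε1⟩ : ε ∈ Ico ε 1)] with y hy
    rcases eq_or_lt_of_le hy.1 with h | h
    · rw [← h, rho_eq_zero hε1 le_rfl, f1_eps]
    · exact rho_eq_f1 h hy.2.le

lemma seam_one (hε0 : 0 < ε) (hε1 : ε < 1) : HasDerivAt (rho r ε) 0 1 := by
  have hinv : (1 : ℝ) < ε⁻¹ := (one_lt_inv₀ hε0).mpr hε1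
  apply glue
  · have hf := (hasDerivAt_f1 (r := r) (ε := ε) 1).hasDerivWithinAt (s := Iic 1)
    rw [f1d_one hε1] at hf
    refine hf.congr_of_eventuallyEq ?_ (rho_eq_f1 hε1 le_rfl)
    filter_upwards [Ioc_mem_nhdsLE_of_mem (⟨hε1, le_refl 1⟩ : (1:ℝ) ∈ Ioc ε 1)] with y hy
    exact rho_eq_f1 hy.1 hy.2
  · have hc : HasDerivAt (fun y : ℝ => f1 r ε y⁻¹)
        (f1d r ε (1 : ℝ)⁻¹ * -(((1 : ℝ) ^ 2)⁻¹)) 1 :=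
      (hasDerivAt_f1 _).comp 1 (hasDerivAt_inv one_ne_zero)
    have hval : f1d r ε (1 : ℝ)⁻¹ * -(((1 : ℝ) ^ 2)⁻¹) = 0 := by
      rw [inv_one, f1d_one hε1]; ring
    rw [hval] at hc
    refine hc.hasDerivWithinAt.congr_of_eventuallyEq ?_ ?_
    · filter_upwards [Ico_mem_nhdsGE_of_mem (⟨le_refl 1, hinv⟩ : (1:ℝ) ∈ Ico 1 ε⁻¹)] with y hy
      rcases eq_or_lt_of_le hy.1 with h | h
      · rw [← h, inv_one]; exact rho_eq_f1 hε1 le_rfl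
      · exact rho_eq_f1_inv hε0 h hy.2
    · rw [inv_one]; exact rho_eq_f1 hε1 le_rfl

lemma rho_hasDerivAt_le_one (hε0 : 0 < ε) (hε1 : ε < 1) {x : ℝ} (hx : x ≤ 1) :
    HasDerivAt (rho r ε) (rho1 r ε x) x := by
  rcases lt_trichotomy x ε with h | h | h
  · have heq : (fun _ : ℝ => (0 : ℝ)) =ᶠ[nhds x] rho r ε := by
      filter_upwards [Iio_mem_nhds h] with y hy
      exact (rho_eq_zero hε1 (le_of_lt hy)).symm
    have h0 : HasDerivAt (rho r ε) 0 x := heq.hasDerivAt_iff.mp (hasDerivAt_const x 0)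
    rwa [rho1_eq_zero hε1 h.le]
  · rw [h, rho1_eq_zero hε1 le_rfl]
    exact seam_eps hε0 hε1
  · rcases eq_or_lt_of_le hx with h1 | h1
    · rw [h1, show rho1 r ε 1 = 0 from by
        rw [rho1_eq_rA1 le_rfl, rA1_eq_f1d hε1, f1d_one hε1]]
      exact seam_one hε0 hε1
    · have heq : f1 r ε =ᶠ[nhds x] rho r ε := by
        filter_upwards [Ioo_mem_nhds h h1] with y hy
        exact (rho_eq_f1 hy.1 hy.2.le).symm
      have := heq.hasDerivAt_iff.mp (hasDerivAt_f1 x)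
      rwa [rho1_eq_rA1 hx, rA1_eq_f1d h]

lemma rho_hasDerivAt (hε0 : 0 < ε) (hε1 : ε < 1) (x : ℝ) :
    HasDerivAt (rho r ε) (rho1 r ε x) x := by
  rcases le_or_gt x 1 with hx | hx
  · exact rho_hasDerivAt_le_one hε0 hε1 hx
  · have hx0 : (0 : ℝ) < x := lt_trans one_pos hx
    have hxi1 : x⁻¹ < 1 := inv_lt_one_of_one_lt₀ hx
    have hin := rho_hasDerivAt_le_one (r := r) hε0 hε1 hxi1.le
    have hcomp := hin.comp x (hasDerivAt_inv (ne_of_gt hx0))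
    have heq : rho r ε =ᶠ[nhds x] (rho r ε ∘ fun y : ℝ => y⁻¹) := by
      filter_upwards [Ioi_mem_nhds hx] with y hy
      have hy0 : (0 : ℝ) < y := lt_trans one_pos hy
      have hyi : y⁻¹ ≤ 1 := (inv_lt_one_of_one_lt₀ hy).le
      show rho r ε y = rho r ε y⁻¹
      unfold rho
      rw [if_neg (not_le.mpr hy), if_pos hyi]
    have h := hcomp.congr_of_eventuallyEq heq
    have hval : rho1 r ε x = rho1 r ε x⁻¹ * -((x ^ 2)⁻¹) := by
      rw [rho1_inv_form hx, rho1_eq_rA1 hxi1.le]; ring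
    rwa [hval]

lemma seam1_eps (hε0 : 0 < ε) (hε1 : ε < 1) : HasDerivAt (rho1 r ε) 0 ε := by
  apply glue
  · exact ((hasDerivAt_const ε (0 : ℝ)).hasDerivWithinAt).congr
      (fun y hy => rho1_eq_zero hε1 hy) (rho1_eq_zero hε1 le_rfl)
  · have hf := (hasDerivAt_f1d (r := r) (ε := ε) ε).hasDerivWithinAt (s := Ici ε)
    rw [f1dd_eps] at hf
    refine hf.congr_of_eventuallyEq ?_ (by rw [rho1_eq_zero hε1 le_rfl, f1d_eps])
    filter_upwards [Ico_mem_nhdsGE_of_mem (⟨le_refl ε, hε1⟩ : ε ∈ Ico ε 1)] with y hy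
    rcases eq_or_lt_of_le hy.1 with h | h
    · rw [← h, rho1_eq_zero hε1 le_rfl, f1d_eps]
    · rw [rho1_eq_rA1 hy.2.le, rA1_eq_f1d h]

lemma seam1_one (hε0 : 0 < ε) (hε1 : ε < 1) : HasDerivAt (rho1 r ε) 0 1 := by
  have hinv : (1 : ℝ) < ε⁻¹ := (one_lt_inv₀ hε0).mpr hε1
  have hrho11 : rho1 r ε 1 = 0 := by
    rw [rho1_eq_rA1 le_rfl, rA1_eq_f1d hε1, f1d_one hε1]
  apply glue
  · have hf := (hasDerivAt_f1d (r := r) (ε := ε) 1).hasDerivWithinAt (s := Iic 1)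
    rw [f1dd_one hε1] at hf
    refine hf.congr_of_eventuallyEq ?_ (by rw [hrho11, f1d_one hε1])
    filter_upwards [Ioc_mem_nhdsLE_of_mem (⟨hε1, le_refl 1⟩ : (1:ℝ) ∈ Ioc ε 1)] with y hy
    rw [rho1_eq_rA1 hy.2, rA1_eq_f1d hy.1]
  · have hc : HasDerivAt (fun y : ℝ => f1d r ε y⁻¹)
        (f1dd r ε (1 : ℝ)⁻¹ * -(((1 : ℝ) ^ 2)⁻¹)) 1 :=
      (hasDerivAt_f1d _).comp 1 (hasDerivAt_inv one_ne_zero)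
    have hG0 := hc.neg.div (hasDerivAt_pow 2 (1 : ℝ)) (by norm_num)
    have hG : HasDerivAt (fun y : ℝ => -f1d r ε y⁻¹ / y ^ 2) 0 1 := by
      refine hG0.congr_deriv ?_
      simp only [Pi.neg_apply, inv_one, f1dd_one hε1, f1d_one hε1]; norm_num
    refine hG.hasDerivWithinAt.congr_of_eventuallyEq ?_ ?_
    · filter_upwards [Ico_mem_nhdsGE_of_mem (⟨le_refl 1, hinv⟩ : (1:ℝ) ∈ Ico 1 ε⁻¹)] with y hy
      rcases eq_or_lt_of_le hy.1 with h | h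
      · rw [← h, hrho11, inv_one, f1d_one hε1]; norm_num
      · rw [rho1_inv_form h, rA1_eq_f1d (inv_gt_eps hε0 h hy.2)]
    · rw [hrho11, inv_one, f1d_one hε1]; norm_num

lemma rho1_hasDerivAt_le_one (hε0 : 0 < ε) (hε1 : ε < 1) {x : ℝ} (hx : x ≤ 1) :
    HasDerivAt (rho1 r ε) (rho2 r ε x) x := by
  rcases lt_trichotomy x ε with h | h | h
  · have heq : (fun _ : ℝ => (0 : ℝ)) =ᶠ[nhds x] rho1 r ε := by
      filter_upwards [Iio_mem_nhds h] with y hy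
      exact (rho1_eq_zero hε1 (le_of_lt hy)).symm
    have h0 : HasDerivAt (rho1 r ε) 0 x := heq.hasDerivAt_iff.mp (hasDerivAt_const x 0)
    rwa [show rho2 r ε x = 0 from by rw [rho2_eq_rA2 hx, rA2_eq_zero h.le]]
  · rw [h, show rho2 r ε ε = 0 from by rw [rho2_eq_rA2 hε1.le, rA2_eq_zero le_rfl]]
    exact seam1_eps hε0 hε1
  · rcases eq_or_lt_of_le hx with h1 | h1
    · rw [h1, show rho2 r ε 1 = 0 from by
        rw [rho2_eq_rA2 le_rfl, rA2_eq_f1dd hε1, f1dd_one hε1]]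
      exact seam1_one hε0 hε1
    · have heq : f1d r ε =ᶠ[nhds x] rho1 r ε := by
        filter_upwards [Ioo_mem_nhds h h1] with y hy
        rw [rho1_eq_rA1 hy.2.le, rA1_eq_f1d hy.1]
      have := heq.hasDerivAt_iff.mp (hasDerivAt_f1d x)
      rwa [rho2_eq_rA2 hx, rA2_eq_f1dd h]

lemma rho1_hasDerivAt (hε0 : 0 < ε) (hε1 : ε < 1) (x : ℝ) :
    HasDerivAt (rho1 r ε) (rho2 r ε x) x := by
  rcases le_or_gt x 1 with hx | hx
  · exact rho1_hasDerivAt_le_one hε0 hε1 hx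
  · have hx0 : (0 : ℝ) < x := lt_trans one_pos hx
    have hxi1 : x⁻¹ < 1 := inv_lt_one_of_one_lt₀ hx
    have hin := rho1_hasDerivAt_le_one (r := r) hε0 hε1 hxi1.le
    have hc := (hin.comp x (hasDerivAt_inv (ne_of_gt hx0))).neg
    have hG := hc.div (hasDerivAt_pow 2 x) (pow_ne_zero 2 (ne_of_gt hx0))
    have heq : rho1 r ε =ᶠ[nhds x] fun y : ℝ => -(rho1 r ε ∘ fun y : ℝ => y⁻¹) y / y ^ 2 := by
      filter_upwards [Ioi_mem_nhds hx] with y hy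
      have hyi1 : y⁻¹ < 1 := inv_lt_one_of_one_lt₀ hy
      show rho1 r ε y = -(rho1 r ε y⁻¹) / y ^ 2
      rw [rho1_inv_form hy, rho1_eq_rA1 hyi1.le]
    have h := hG.congr_of_eventuallyEq heq
    refine h.congr_deriv ?_
    simp only [Function.comp_apply, Pi.neg_apply]
    rw [show rho2 r ε x = rA2 r ε x⁻¹ / x ^ 4 + 2 * rA1 r ε x⁻¹ / x ^ 3 from
      if_neg (not_le.mpr hx), rho2_eq_rA2 hxi1.le, rho1_eq_rA1 hxi1.le]
    push_cast
    field_simp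
    ring

-- bounds on tau2 and tau3

lemma tau2_nonneg {t : ℝ} : 0 ≤ tau2 t := by
  have h : tau2 t = 30 * (t - t ^ 2) ^ 2 := by unfold tau2; ring
  rw [h]; positivity

lemma tau2_le {t : ℝ} (ht0 : 0 ≤ t) (ht1 : t ≤ 1) : tau2 t ≤ 15 / 8 := by
  have hu0 : 0 ≤ t - t ^ 2 := by nlinarith
  have hu4 : t - t ^ 2 ≤ 1 / 4 := by nlinarith [sq_nonneg (2 * t - 1)]
  have h : tau2 t = 30 * (t - t ^ 2) ^ 2 := by unfold tau2; ring
  nlinarith [mul_nonneg hu0 (by linarith : (0:ℝ) ≤ 1 / 4 - (t - t ^ 2))]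

lemma abs_tau3_le {t : ℝ} (ht0 : 0 ≤ t) (ht1 : t ≤ 1) : |tau3 t| ≤ 6 := by
  have hu0 : 0 ≤ t - t ^ 2 := by nlinarith
  have key : (t - t ^ 2) ^ 2 - 4 * (t - t ^ 2) ^ 3 ≤ 1 / 100 := by
    nlinarith [mul_nonneg hu0 (sq_nonneg (t - t ^ 2 - 1 / 6)), sq_nonneg (t - t ^ 2 - 1 / 6)]
  have hid : (tau3 t) ^ 2 = 3600 * ((t - t ^ 2) ^ 2 - 4 * (t - t ^ 2) ^ 3) := by
    unfold tau3; ring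
  have hsq : (tau3 t) ^ 2 ≤ 36 := by rw [hid]; linarith
  rw [abs_le]
  constructor
  · nlinarith [sq_nonneg (tau3 t + 6)]
  · nlinarith [sq_nonneg (tau3 t - 6)]

lemma abs_rA1_le (hr5 : (5 : ℝ) ≤ (r : ℝ)) (hε0 : 0 < ε) (hε2 : ε < 1 / 2)
    {y : ℝ} (hy0 : 0 ≤ y) (hy1 : y ≤ 1) : |rA1 r ε y| ≤ 15 / 16 * ((r : ℝ) - 4) := by
  have hc0 : (0 : ℝ) ≤ (r : ℝ) - 4 := by linarith
  by_cases hyε : y ≤ ε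
  · rw [rA1_eq_zero hyε, abs_zero]; linarith
  · push_neg at hyε
    rw [rA1_eq_f1d hyε]
    unfold f1d
    set t := (y - ε) / (1 - ε) with ht
    have hδ : (0 : ℝ) < 1 - ε := by linarith
    have ht0 : 0 ≤ t := div_nonneg (by linarith) hδ.le
    have ht1 : t ≤ 1 := (div_le_one hδ).mpr (by linarith)
    have hT0 := tau2_nonneg (t := t)
    have hT := tau2_le ht0 ht1
    rw [abs_of_nonneg (by positivity)]
    rw [div_le_iff₀ hδ]
    nlinarith [mul_nonneg hc0 (by linarith : (0:ℝ) ≤ 15 / 8 - tau2 t),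
      mul_nonneg hc0 (by linarith : (0:ℝ) ≤ 1 / 2 - ε)]

lemma abs_rA2_le (hr5 : (5 : ℝ) ≤ (r : ℝ)) (hε0 : 0 < ε) (hε2 : ε < 1 / 2)
    {y : ℝ} (hy0 : 0 ≤ y) (hy1 : y ≤ 1) : |rA2 r ε y| ≤ 6 * ((r : ℝ) - 4) := by
  have hc0 : (0 : ℝ) ≤ (r : ℝ) - 4 := by linarith
  by_cases hyε : y ≤ ε
  · rw [rA2_eq_zero hyε, abs_zero]; linarith
  · push_neg at hyε
    rw [rA2_eq_f1dd hyε]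
    unfold f1dd
    set t := (y - ε) / (1 - ε) with ht
    have hδ : (0 : ℝ) < 1 - ε := by linarith
    have ht0 : 0 ≤ t := div_nonneg (by linarith) hδ.le
    have ht1 : t ≤ 1 := (div_le_one hδ).mpr (by linarith)
    have hT := abs_tau3_le ht0 ht1
    have hTn := abs_nonneg (tau3 t)
    have habs : |((r : ℝ) - 4) * tau3 t / 4 / (1 - ε) / (1 - ε)| =
        ((r : ℝ) - 4) * |tau3 t| / 4 / (1 - ε) / (1 - ε) := by
      rw [abs_div, abs_div, abs_div, abs_mul, abs_of_nonneg hc0, abs_of_nonneg hδ.le]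
      norm_num
    rw [habs, div_le_iff₀ hδ, div_le_iff₀ hδ]
    nlinarith [mul_nonneg hc0 (by linarith : (0:ℝ) ≤ 6 - |tau3 t|),
      mul_nonneg hc0 (by linarith : (0:ℝ) ≤ 1 / 2 - ε),
      mul_nonneg (mul_nonneg hc0 (by linarith : (0:ℝ) ≤ 1 / 2 - ε))
        (by linarith : (0:ℝ) ≤ 1 / 2 - ε)]

lemma abs_rho1_le (hr5 : (5 : ℝ) ≤ (r : ℝ)) (hε0 : 0 < ε) (hε2 : ε < 1 / 2)
    {x : ℝ} (hx : 0 ≤ x) : |rho1 r ε x| ≤ (r : ℝ) := by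
  rcases le_or_gt x 1 with h | h
  · rw [rho1_eq_rA1 h]
    have := abs_rA1_le hr5 hε0 hε2 hx h
    linarith
  · have hx0 : (0 : ℝ) < x := lt_trans one_pos h
    have hxi0 : (0 : ℝ) ≤ x⁻¹ := (inv_nonneg).mpr hx
    have hxi1 : x⁻¹ ≤ 1 := (inv_lt_one_of_one_lt₀ h).le
    have hA := abs_rA1_le hr5 hε0 hε2 hxi0 hxi1
    rw [rho1_inv_form h, abs_div, abs_neg, abs_of_nonneg (by positivity : (0:ℝ) ≤ x ^ 2)]
    have h2 : (1 : ℝ) ≤ x ^ 2 := one_le_pow₀ h.le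
    have := div_le_self (abs_nonneg (rA1 r ε x⁻¹)) h2
    linarith

lemma abs_rho2_le (hr5 : (5 : ℝ) ≤ (r : ℝ)) (hε0 : 0 < ε) (hε2 : ε < 1 / 2)
    {x : ℝ} (hx : 0 ≤ x) : |rho2 r ε x| ≤ 10 * (r : ℝ) := by
  rcases le_or_gt x 1 with h | h
  · rw [rho2_eq_rA2 h]
    have := abs_rA2_le hr5 hε0 hε2 hx h
    linarith
  · have hx0 : (0 : ℝ) < x := lt_trans one_pos h
    have hxi0 : (0 : ℝ) ≤ x⁻¹ := (inv_nonneg).mpr hx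
    have hxi1 : x⁻¹ ≤ 1 := (inv_lt_one_of_one_lt₀ h).le
    have hA1 := abs_rA1_le hr5 hε0 hε2 hxi0 hxi1
    have hA2 := abs_rA2_le hr5 hε0 hε2 hxi0 hxi1
    rw [show rho2 r ε x = rA2 r ε x⁻¹ / x ^ 4 + 2 * rA1 r ε x⁻¹ / x ^ 3 from
      if_neg (not_le.mpr h)]
    have h4 : (1 : ℝ) ≤ x ^ 4 := one_le_pow₀ h.le
    have h3 : (1 : ℝ) ≤ x ^ 3 := one_le_pow₀ h.le
    have e1 : |rA2 r ε x⁻¹ / x ^ 4| ≤ 6 * ((r : ℝ) - 4) := by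
      rw [abs_div, abs_of_nonneg (by positivity : (0:ℝ) ≤ x ^ 4)]
      have := div_le_self (abs_nonneg (rA2 r ε x⁻¹)) h4
      linarith
    have e2 : |2 * rA1 r ε x⁻¹ / x ^ 3| ≤ 2 * (15 / 16 * ((r : ℝ) - 4)) := by
      rw [abs_div, abs_mul, abs_two, abs_of_nonneg (by positivity : (0:ℝ) ≤ x ^ 3)]
      have hd := div_le_self (by positivity : (0:ℝ) ≤ 2 * |rA1 r ε x⁻¹|) h3
      calc 2 * |rA1 r ε x⁻¹| / x ^ 3 ≤ 2 * |rA1 r ε x⁻¹| := hd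
        _ ≤ 2 * (15 / 16 * ((r : ℝ) - 4)) := by linarith
    calc |rA2 r ε x⁻¹ / x ^ 4 + 2 * rA1 r ε x⁻¹ / x ^ 3| ≤
        |rA2 r ε x⁻¹ / x ^ 4| + |2 * rA1 r ε x⁻¹ / x ^ 3| := abs_add_le _ _
      _ ≤ 10 * (r : ℝ) := by linarith

lemma rho_bounds (hr5 : (5 : ℝ) ≤ (r : ℝ)) (hε0 : 0 < ε) (hε2 : ε < 1 / 2)
    {x : ℝ} (hx0 : 0 ≤ x) (hx1 : x ≤ 1) :
    0 ≤ rho r ε x ∧ rho r ε x ≤ ((r : ℝ) - 4) * x / 2 := by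
  have hc0 : (0 : ℝ) ≤ (r : ℝ) - 4 := by linarith
  have hδ : (0 : ℝ) < 1 - ε := by linarith
  unfold rho rhoAux
  rw [if_pos hx1]
  by_cases hxε : x ≤ ε
  · rw [if_pos hxε]
    refine ⟨le_rfl, ?_⟩
    positivity
  · push_neg at hxε
    rw [if_neg (not_le.mpr hxε)]
    set t := (x - ε) / (1 - ε) with ht
    have ht0 : 0 ≤ t := div_nonneg (by linarith) hδ.le
    have ht1 : t ≤ 1 := (div_le_one hδ).mpr (by linarith)
    have htx : t * (1 - ε) = x - ε := div_mul_cancel₀ _ (ne_of_gt hδ)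
    have hτ0 : 0 ≤ tauPoly t := by
      have h2 : (0 : ℝ) ≤ 6 * t ^ 2 - 15 * t + 10 := by nlinarith [sq_nonneg (t - 5 / 4)]
      have := mul_nonneg (pow_nonneg ht0 3) h2
      unfold tauPoly; nlinarith
    have hτ2 : tauPoly t ≤ 2 * t := by
      unfold tauPoly
      nlinarith [mul_nonneg ht0 (by linarith : (0:ℝ) ≤ 1 - t), sq_nonneg (t - 1),
        sq_nonneg (t ^ 2 - t), mul_nonneg (mul_nonneg ht0 ht0) (by linarith : (0:ℝ) ≤ 1 - t),
        sq_nonneg t, mul_nonneg (mul_nonneg (mul_nonneg ht0 ht0) ht0)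
          (by linarith : (0:ℝ) ≤ 1 - t), sq_nonneg (t ^ 2 - t / 2)]
    constructor
    · positivity
    · nlinarith [mul_le_mul_of_nonneg_left hτ2 hc0,
        mul_nonneg hc0 (mul_nonneg hε0.le (by linarith : (0:ℝ) ≤ 1 - t))]

end RhoProof

/-- For every integer `r ≥ 5` and `ε ∈ (0, 1/2)`, `ρ_{r,ε}` is twice differentiable on
`(0,∞)`, satisfies `0 ≤ ρ_{r,ε}(x) ≤ (r−4)x/2` on `[0,1]`, and its first and second
derivatives are bounded by `r` and `10r` respectively. -/
theorem rho_properties (r : ℕ) (hr : 5 ≤ r) (ε : ℝ) (hε : ε ∈ Set.Ioo (0 : ℝ) (1 / 2)) :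
    (∀ x ∈ Set.Ioi (0 : ℝ),
        DifferentiableAt ℝ (rho r ε) x ∧ DifferentiableAt ℝ (deriv (rho r ε)) x) ∧
      (∀ x ∈ Set.Icc (0 : ℝ) 1, 0 ≤ rho r ε x ∧ rho r ε x ≤ ((r : ℝ) - 4) * x / 2) ∧
      (∀ x ∈ Set.Ici (0 : ℝ), |deriv (rho r ε) x| ≤ (r : ℝ)) ∧
      (∀ x ∈ Set.Ici (0 : ℝ), |deriv (deriv (rho r ε)) x| ≤ 10 * (r : ℝ)) := by
  obtain ⟨hε0, hε2⟩ := hε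
  have hε1 : ε < 1 := by linarith
  have hr5 : (5 : ℝ) ≤ (r : ℝ) := by exact_mod_cast hr
  have hd1 : ∀ x, HasDerivAt (rho r ε) (RhoProof.rho1 r ε x) x :=
    RhoProof.rho_hasDerivAt hε0 hε1
  have hderiv : deriv (rho r ε) = RhoProof.rho1 r ε := funext fun x => (hd1 x).deriv
  have hd2 : ∀ x, HasDerivAt (RhoProof.rho1 r ε) (RhoProof.rho2 r ε x) x :=
    RhoProof.rho1_hasDerivAt hε0 hε1
  have hderiv2 : deriv (RhoProof.rho1 r ε) = RhoProof.rho2 r ε :=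
    funext fun x => (hd2 x).deriv
  refine ⟨fun x _ => ⟨(hd1 x).differentiableAt, ?_⟩,
    fun x hx => RhoProof.rho_bounds hr5 hε0 hε2 hx.1 hx.2, fun x hx => ?_, fun x hx => ?_⟩
  · rw [hderiv]; exact (hd2 x).differentiableAt
  · rw [hderiv]; exact RhoProof.abs_rho1_le hr5 hε0 hε2 hx
  · rw [hderiv, hderiv2]; exact RhoProof.abs_rho2_le hr5 hε0 hε2 hx
end
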